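/- arXiv:0710.5062 — 2 statements merged into one kernel-verified Lean document; each statement's English description precedes it below -/
import Mathlib

section
/- Let G be an AH-algebra, let g ∈ G with spectral bounds L := L_g and U := U_g, spectral resolution (p_λ)_{λ∈ℝ} and eigenprojections (d_λ)_{λ∈ℝ}. Then for all λ,μ ∈ ℝ: (1) p_λ, d_λ ∈ P ∩ CC(g); (2) p_λg − λp_λ ≤ 0 ≤ (1−p_λ)g − λ(1−p_λ); (3) λ ≤ μ implies p_λ ≤ p_μ; (4) λ < μ implies d_λ ≤ p_λ ≤ 1−d_μ; (5) λ > U implies p_λ = 1, and λ < U implies p_λ < 1; (6) λ < L implies p_λ = 0, and L < λ implies 0 < p_λ; (7) if λ ≤ μ and q ∈ P with q ≤ p_μ − p_λ, then λq ≤ qgq ≤ μq. -/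
/-- An e-ring `(R,E)`: an associative ring `R` with unity together with a set `E ⊆ R`
of effects, satisfying the Foulis axioms.  `E⁺` is realized as the additive submonoid
closure of `E` (the set of all finite sums of effects). -/
structure ERing (R : Type*) [Ring R] where
  E : Set R
  zero_mem : (0 : R) ∈ E
  one_mem : (1 : R) ∈ E
  compl_mem : ∀ e ∈ E, 1 - e ∈ E
  epos_i : ∀ a ∈ AddSubmonoid.closure E, -a ∈ AddSubmonoid.closure E → a = 0
  epos_ii : ∀ a ∈ AddSubmonoid.closure E, 1 - a ∈ AddSubmonoid.closure E → a ∈ E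
  epos_iii : ∀ a ∈ AddSubmonoid.closure E, ∀ b ∈ AddSubmonoid.closure E,
    a * b = b * a → a * b ∈ AddSubmonoid.closure E
  epos_iv : ∀ a ∈ AddSubmonoid.closure E, ∀ b ∈ AddSubmonoid.closure E,
    a * b * a ∈ AddSubmonoid.closure E
  epos_v : ∀ a ∈ AddSubmonoid.closure E, ∀ b ∈ AddSubmonoid.closure E,
    a * b * a = 0 → a * b = 0 ∧ b * a = 0
  epos_vi : ∀ a ∈ AddSubmonoid.closure E, ∀ b ∈ AddSubmonoid.closure E,
    (a - b) ^ 2 ∈ AddSubmonoid.closure E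
  zero_ne_one : (0 : R) ≠ 1

namespace ERing

variable {R : Type*} [Ring R] (er : ERing R)

/-- `E⁺`, the set of all finite sums of effects; the positive cone of the directed group. -/
def Epos : Set R := (AddSubmonoid.closure er.E : Set R)

/-- The directed group `G = E⁺ - E⁺` of the e-ring. -/
def G : Set R := {g | ∃ a ∈ er.Epos, ∃ b ∈ er.Epos, g = a - b}

/-- The partial order on the directed group: `g ≤ h` iff `h - g ∈ E⁺`. -/
def le (g h : R) : Prop := h - g ∈ er.Epos

/-- The set of projections `P = {p ∈ G : p = p²}`. -/
def P : Set R := {p | p ∈ er.G ∧ p = p ^ 2}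

/-- The commutant in `G` of a subset `A ⊆ G`. -/
def commutant (A : Set R) : Set R := {g | g ∈ er.G ∧ ∀ a ∈ A, g * a = a * g}

/-- The bicommutant in `G` of a subset `A ⊆ G`. -/
def CC (A : Set R) : Set R := er.commutant (er.commutant A)

/-- `s` is the supremum of `A` within the subset `S` (w.r.t. the e-ring order). -/
def IsSupIn (S A : Set R) (s : R) : Prop :=
  s ∈ S ∧ (∀ a ∈ A, er.le a s) ∧ ∀ b ∈ S, (∀ a ∈ A, er.le a b) → er.le s b

/-- `s` is the infimum of `A` within the subset `S` (w.r.t. the e-ring order). -/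
def IsInfIn (S A : Set R) (s : R) : Prop :=
  s ∈ S ∧ (∀ a ∈ A, er.le s a) ∧ ∀ b ∈ S, (∀ a ∈ A, er.le b a) → er.le b s

/-- Quadratic annihilation property. -/
def HasQA : Prop := ∀ g ∈ er.G, ∀ h ∈ er.G, g * h ^ 2 * g = 0 → g * h = 0 ∧ h * g = 0

/-- Commutative Vigier property: every ascending sequence of pairwise commuting elements
of `G` bounded above in `G` has a supremum in `G` which double commutes with the sequence. -/
def HasCV : Prop :=
  ∀ g : ℕ → R, (∀ n, g n ∈ er.G) → (∀ n, er.le (g n) (g (n + 1))) →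
    (∀ m n, g m * g n = g n * g m) → (∃ b ∈ er.G, ∀ n, er.le (g n) b) →
    ∃ s, er.IsSupIn er.G (Set.range g) s ∧ s ∈ er.CC (Set.range g)

/-- `G` is an abstract Hermitian (AH) algebra: there is a semitransparent effect `½`,
`G` has quadratic annihilation, and `G` has the commutative Vigier property. -/
def IsAH : Prop := (∃ h ∈ er.E, h + h = 1) ∧ er.HasQA ∧ er.HasCV

end ERing

namespace ERing

variable {R : Type*} [Ring R] (er : ERing R)

/-- `m` is the absolute value `|g| = (g²)^(1/2)` of `g`: `m ∈ G`, `0 ≤ m`, `m² = g²`. -/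
def IsAbs (g m : R) : Prop := m ∈ er.G ∧ er.le 0 m ∧ m ^ 2 = g ^ 2

/-- `a` is the positive part `g⁺ = ½(|g| + g)` of `g`, i.e. `a ∈ G` and `a + a = |g| + g`. -/
def IsPosPart (g a : R) : Prop := a ∈ er.G ∧ ∃ m, er.IsAbs g m ∧ a + a = m + g

/-- `b` is the negative part `g⁻ = ½(|g| − g)` of `g`, i.e. `b ∈ G` and `b + b = |g| − g`. -/
def IsNegPart (g b : R) : Prop := b ∈ er.G ∧ ∃ m, er.IsAbs g m ∧ b + b = m - g

/-- `p` is the carrier projection `g°` of `g`. -/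
def IsCarrier (g p : R) : Prop := p ∈ er.P ∧ ∀ h ∈ er.G, (g * h = 0 ↔ p * h = 0)

end ERing

namespace ERing

variable {R : Type*} [Ring R] [Algebra ℝ R] (er : ERing R)

/-- The 1-norm `‖g‖ = inf {λ : 0 ≤ λ, −λ·1 ≤ g ≤ λ·1}`. -/
noncomputable def norm1 (g : R) : ℝ :=
  sInf {l : ℝ | 0 ≤ l ∧ er.le (-(l • (1 : R))) g ∧ er.le g (l • (1 : R))}

/-- The spectral lower bound `L_g = sup {λ : λ·1 ≤ g}`. -/
noncomputable def specL (g : R) : ℝ := sSup {l : ℝ | er.le (l • (1 : R)) g}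

/-- The spectral upper bound `U_g = inf {λ : g ≤ λ·1}`. -/
noncomputable def specU (g : R) : ℝ := sInf {l : ℝ | er.le g (l • (1 : R))}

/-- `p` is the spectral projection `p_{g,λ} = 1 − ((g − λ·1)⁺)°`. -/
def IsSpecProj (g : R) (l : ℝ) (p : R) : Prop :=
  ∃ a, er.IsPosPart (g - l • (1 : R)) a ∧ ∃ q, er.IsCarrier a q ∧ p = 1 - q

/-- `d` is the λ-eigenprojection `d_{g,λ} = 1 − (g − λ·1)°`. -/
def IsEigenProj (g : R) (l : ℝ) (d : R) : Prop :=
  ∃ q, er.IsCarrier (g - l • (1 : R)) q ∧ d = 1 - q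

end ERing

namespace ERing

variable {R : Type*} [Ring R] (er : ERing R)

lemma le_def {x y : R} : er.le x y ↔ y - x ∈ er.Epos := Iff.rfl

lemma E_subset_Epos {e : R} (he : e ∈ er.E) : e ∈ er.Epos :=
  AddSubmonoid.subset_closure he

lemma zero_mem_Epos : (0:R) ∈ er.Epos := (AddSubmonoid.closure er.E).zero_mem

lemma one_mem_Epos : (1:R) ∈ er.Epos := er.E_subset_Epos er.one_mem

lemma add_mem_Epos {a b : R} (ha : a ∈ er.Epos) (hb : b ∈ er.Epos) :
    a + b ∈ er.Epos := (AddSubmonoid.closure er.E).add_mem ha hb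

lemma eq_zero_of_pm_mem {a : R} (h : a ∈ er.Epos) (h' : -a ∈ er.Epos) : a = 0 :=
  er.epos_i a h h'

lemma Epos_subset_G {a : R} (ha : a ∈ er.Epos) : a ∈ er.G :=
  ⟨a, ha, 0, er.zero_mem_Epos, (sub_zero a).symm⟩

lemma zero_mem_G : (0:R) ∈ er.G := er.Epos_subset_G er.zero_mem_Epos

lemma one_mem_G : (1:R) ∈ er.G := er.Epos_subset_G er.one_mem_Epos

lemma add_mem_G {x y : R} (hx : x ∈ er.G) (hy : y ∈ er.G) : x + y ∈ er.G := by
  obtain ⟨a, ha, b, hb, rfl⟩ := hx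
  obtain ⟨c, hc, d, hd, rfl⟩ := hy
  exact ⟨a + c, er.add_mem_Epos ha hc, b + d, er.add_mem_Epos hb hd, by abel⟩

lemma neg_mem_G {x : R} (hx : x ∈ er.G) : -x ∈ er.G := by
  obtain ⟨a, ha, b, hb, rfl⟩ := hx
  exact ⟨b, hb, a, ha, by abel⟩

lemma sub_mem_G {x y : R} (hx : x ∈ er.G) (hy : y ∈ er.G) : x - y ∈ er.G := by
  have := er.add_mem_G hx (er.neg_mem_G hy); rwa [← sub_eq_add_neg] at this

lemma sq_mem_Epos {x : R} (hx : x ∈ er.G) : x * x ∈ er.Epos := by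
  obtain ⟨a, ha, b, hb, rfl⟩ := hx
  have := er.epos_vi a ha b hb
  rwa [pow_two] at this

lemma mul_mem_Epos {a b : R} (ha : a ∈ er.Epos) (hb : b ∈ er.Epos)
    (h : a * b = b * a) : a * b ∈ er.Epos := er.epos_iii a ha b hb h

lemma conj_mem_Epos {a b : R} (ha : a ∈ er.Epos) (hb : b ∈ er.Epos) :
    a * b * a ∈ er.Epos := er.epos_iv a ha b hb

lemma le_refl (x : R) : er.le x x := by
  rw [le_def, sub_self]; exact er.zero_mem_Epos

lemma le_trans {x y z : R} (h : er.le x y) (h' : er.le y z) : er.le x z := by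
  rw [le_def] at *
  have := er.add_mem_Epos h h'
  rwa [show y - x + (z - y) = z - x by abel] at this

lemma le_antisymm {x y : R} (h : er.le x y) (h' : er.le y x) : x = y := by
  rw [le_def] at *
  have h0 : y - x = 0 := er.eq_zero_of_pm_mem h (by rwa [neg_sub])
  exact (sub_eq_zero.mp h0).symm

lemma exists_nat_bound {c : R} (hc : c ∈ er.Epos) :
    ∃ n : ℕ, (n : R) - c ∈ er.Epos := by
  induction hc using AddSubmonoid.closure_induction with
  | mem e he =>
      exact ⟨1, by simpa using er.E_subset_Epos (er.compl_mem e he)⟩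
  | zero => exact ⟨0, by simpa using er.zero_mem_Epos⟩
  | add a b _ _ iha ihb =>
      obtain ⟨n, hn⟩ := iha; obtain ⟨m, hm⟩ := ihb
      refine ⟨n + m, ?_⟩
      have := er.add_mem_Epos hn hm
      rwa [show ((n:R) - a) + ((m:R) - b) = ((n+m : ℕ) : R) - (a + b) by push_cast; abel] at this

end ERing

set_option linter.unusedSectionVars false

private lemma half_add' {R : Type*} [Ring R] [Algebra ℝ R] (a : R) :
    (2⁻¹:ℝ) • (a + a) = a := by
  rw [smul_add, ← add_smul]; norm_num

private lemma two_smul'' {R : Type*} [Ring R] [Algebra ℝ R] (a : R) :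
    (2:ℝ) • a = a + a := by
  rw [show (2:ℝ) = 1 + 1 by norm_num, add_smul, one_smul]

namespace ERing

variable {R : Type*} [Ring R] [Algebra ℝ R] (er : ERing R)

section Scal

variable (hscal : ∀ l : ℝ, 0 ≤ l → ∀ a ∈ er.Epos, l • a ∈ er.Epos)

include hscal in
lemma smul_mem_G {l : ℝ} {x : R} (hx : x ∈ er.G) : l • x ∈ er.G := by
  obtain ⟨a, ha, b, hb, rfl⟩ := hx
  rcases le_or_gt 0 l with h | h
  · exact ⟨l • a, hscal l h a ha, l • b, hscal l h b hb, by rw [smul_sub]⟩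
  · refine ⟨(-l) • b, hscal (-l) (by linarith) b hb, (-l) • a, hscal (-l) (by linarith) a ha, ?_⟩
    rw [smul_sub, neg_smul, neg_smul]; abel

include hscal in
lemma smul_mem_Epos_cancel {l : ℝ} (hl : 0 < l) {x : R} (h : l • x ∈ er.Epos) :
    x ∈ er.Epos := by
  have := hscal l⁻¹ (by positivity) _ h
  rwa [smul_smul, inv_mul_cancel₀ hl.ne', one_smul] at this

include er in
lemma smul_one_eq_zero {t : ℝ} (h : t • (1:R) = 0) : t = 0 := by
  by_contra ht
  have h1 : (1:R) = 0 := by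
    calc (1:R) = t⁻¹ • (t • (1:R)) := by rw [smul_smul, inv_mul_cancel₀ ht, one_smul]
    _ = 0 := by rw [h, smul_zero]
  exact er.zero_ne_one h1.symm

lemma jordan_mem_G {x y : R} (hx : x ∈ er.G) (hy : y ∈ er.G) :
    x * y + y * x ∈ er.G := by
  have h : x * y + y * x = (x+y)*(x+y) - (x*x + y*y) := by noncomm_ring
  rw [h]
  exact er.sub_mem_G (er.Epos_subset_G (er.sq_mem_Epos (er.add_mem_G hx hy)))
    (er.add_mem_G (er.Epos_subset_G (er.sq_mem_Epos hx))
      (er.Epos_subset_G (er.sq_mem_Epos hy)))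

include hscal in
lemma mul_mem_G {x y : R} (hx : x ∈ er.G) (hy : y ∈ er.G) (h : x * y = y * x) :
    x * y ∈ er.G := by
  have h1 : (2⁻¹:ℝ) • (x * y + y * x) = x * y := by rw [← h]; exact half_add' _
  rw [← h1]
  exact er.smul_mem_G hscal (er.jordan_mem_G hx hy)

lemma exists_real_bound {c : R} (hc : c ∈ er.Epos) :
    ∃ t : ℝ, 0 < t ∧ t • (1:R) - c ∈ er.Epos := by
  obtain ⟨n, hn⟩ := er.exists_nat_bound hc
  refine ⟨(n:ℝ) + 1, by positivity, ?_⟩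
  have h1 : ((n:ℝ) + 1) • (1:R) = (n:R) + 1 := by
    rw [add_smul, one_smul, Nat.cast_smul_eq_nsmul, nsmul_eq_mul, mul_one]
  rw [show ((n:ℝ)+1) • (1:R) - c = (((n:ℝ)+1) • (1:R) - ((n:R) + 1)) + (((n:R) - c) + 1) by abel]
  rw [h1, sub_self]
  rw [zero_add]
  exact er.add_mem_Epos hn er.one_mem_Epos

end Scal

section QA

variable (hQA : er.HasQA)

include hQA in
lemma ann_symm {x y : R} (hx : x ∈ er.G) (hy : y ∈ er.G) (h : x * y = 0) :
    y * x = 0 := by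
  have h2 : x * y ^ 2 * x = 0 := by
    rw [pow_two, show x * (y * y) * x = (x * y) * (y * x) by noncomm_ring, h, zero_mul]
  exact (hQA x hx y hy h2).2

lemma carrier_q_idem {a q : R} (hq : er.IsCarrier a q) : q * q = q := by
  have h := hq.1.2; rw [pow_two] at h; exact h.symm

lemma carrier_q_G {a q : R} (hq : er.IsCarrier a q) : q ∈ er.G := hq.1.1

include hQA in
lemma carrier_absorb {a q : R} (ha : a ∈ er.G) (hq : er.IsCarrier a q) :
    a * q = a ∧ q * a = a := by
  have h1q : (1:R) - q ∈ er.G := er.sub_mem_G er.one_mem_G (er.carrier_q_G hq)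
  have hqq : q * (1 - q) = 0 := by
    rw [mul_sub, mul_one, er.carrier_q_idem hq, sub_self]
  have haq : a * (1 - q) = 0 := ((hq.2 _ h1q).mpr hqq)
  have h1 : a * q = a := by
    have h' := haq; rw [mul_sub, mul_one, sub_eq_zero] at h'; exact h'.symm
  have hqa : (1 - q) * a = 0 := er.ann_symm hQA ha h1q haq
  have h2 : q * a = a := by
    rw [sub_mul, one_mul, sub_eq_zero] at hqa; exact hqa.symm
  exact ⟨h1, h2⟩

include hQA in
lemma carrier_commute {a q : R} (ha : a ∈ er.G) (hq : er.IsCarrier a q)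
    {k : R} (hk : k ∈ er.G) (hcom : k * a = a * k) : k * q = q * k := by
  obtain ⟨haq, hqa⟩ := er.carrier_absorb hQA ha hq
  have hqG : q ∈ er.G := er.carrier_q_G hq
  have h1q : (1:R) - q ∈ er.G := er.sub_mem_G er.one_mem_G hqG
  have hidem := er.carrier_q_idem hq
  have ha1q : a * (1 - q) = 0 := by rw [mul_sub, mul_one, haq, sub_self]
  set j := k * (1 - q) + (1 - q) * k with hj
  have hjG : j ∈ er.G := er.jordan_mem_G hk h1q
  have haj : a * j = 0 := by
    have t1 : a * (k * (1-q)) = 0 := by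
      rw [← mul_assoc, ← hcom, mul_assoc, ha1q, mul_zero]
    have t2 : a * ((1-q) * k) = 0 := by rw [← mul_assoc, ha1q, zero_mul]
    rw [hj, mul_add, t1, t2, add_zero]
  have hqj : q * j = 0 := (hq.2 j hjG).mp haj
  have hjq : j * q = 0 := er.ann_symm hQA hqG hjG hqj
  have hq1q : q * (1 - q) = 0 := by rw [mul_sub, mul_one, hidem, sub_self]
  have h1qq : (1 - q) * q = 0 := by rw [sub_mul, one_mul, hidem, sub_self]
  have e1 : q * k * (1 - q) = 0 := by
    have t2 : q * ((1-q) * k) = 0 := by rw [← mul_assoc, hq1q, zero_mul]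
    have t1 : q * (k * (1-q)) + q * ((1-q) * k) = 0 := by rw [← mul_add, ← hj, hqj]
    rw [t2, add_zero] at t1
    rwa [← mul_assoc] at t1
  have e2 : (1 - q) * k * q = 0 := by
    have t2 : (k * (1-q)) * q = 0 := by rw [mul_assoc, h1qq, mul_zero]
    have t1 : (k * (1-q)) * q + ((1-q) * k) * q = 0 := by rw [← add_mul, ← hj, hjq]
    rwa [t2, zero_add] at t1
  have f1 : q * k = q * k * q := by
    have := e1; rw [mul_sub, mul_one, sub_eq_zero] at this; exact this
  have f2 : k * q = q * (k * q) := by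
    have h0 : (1 - q) * (k * q) = 0 := by rw [← mul_assoc]; exact e2
    rw [sub_mul, one_mul, sub_eq_zero] at h0; exact h0
  rw [f2, ← mul_assoc, ← f1]

end QA

end ERing


private lemma comm_one_sub {R : Type*} [Ring R] {u v : R} (h : u * v = v * u) :
    u * (1 - v) = (1 - v) * u := by
  rw [mul_sub, sub_mul, mul_one, one_mul, h]

private lemma iter_id1 {R : Type*} [Ring R] [Algebra ℝ R] (u c : R) :
    1 - (u + (2⁻¹:ℝ) • (c - u*u)) = (2⁻¹:ℝ) • ((1-u)*(1-u) + (1-c)) := by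
  simp only [sub_mul, mul_sub, one_mul, mul_one]
  module

private lemma iter_id2 {R : Type*} [Ring R] [Algebra ℝ R] (u y : R) (hc : u * y = y * u) :
    (y + u*u) - (u + (2⁻¹:ℝ) • y) * (u + (2⁻¹:ℝ) • y)
      = (2⁻¹:ℝ) • (y * (1-u) + y * (1 - (u + (2⁻¹:ℝ) • y))) := by
  simp only [mul_add, add_mul, mul_sub, sub_mul, mul_one, one_mul,
    smul_mul_assoc, mul_smul_comm, smul_smul, smul_sub, smul_add, hc]
  module

namespace ERing

variable {R : Type*} [Ring R] [Algebra ℝ R] (er : ERing R)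

lemma sqrt_norm (hAH : er.IsAH)
    (hscal : ∀ l : ℝ, 0 ≤ l → ∀ a ∈ er.Epos, l • a ∈ er.Epos)
    {c : R} (hc : c ∈ er.Epos) (hc1 : 1 - c ∈ er.Epos) :
    ∃ s ∈ er.Epos, s * s = c ∧ ∀ k ∈ er.G, k * c = c * k → k * s = s * k := by
  obtain ⟨-, -, hCV⟩ := hAH
  have cG : c ∈ er.G := er.Epos_subset_G hc
  set x : ℕ → R := fun n => Nat.rec (0:R) (fun _ xn => xn + (2⁻¹:ℝ) • (c - xn * xn)) n
    with hxdef
  have hx0 : x 0 = 0 := rfl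
  have hxs : ∀ n, x (n+1) = x n + (2⁻¹:ℝ) • (c - x n * x n) := fun n => rfl
  -- commutation with anything commuting with c
  have hcomm : ∀ n, ∀ k : R, k * c = c * k → k * x n = x n * k := by
    intro n
    induction n with
    | zero => intro k hk; rw [hx0, mul_zero, zero_mul]
    | succ n ih =>
        intro k hk
        have h2 : k * (x n * x n) = (x n * x n) * k := by
          rw [← mul_assoc, ih k hk, mul_assoc, ih k hk, ← mul_assoc]
        rw [hxs n, mul_add, add_mul, ih k hk, mul_smul_comm, smul_mul_assoc,
          mul_sub, sub_mul, hk, h2]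
  have hxc : ∀ n, x n * c = c * x n := fun n => (hcomm n c rfl).symm
  have hxx : ∀ m n, x m * x n = x n * x m := fun m n => hcomm n (x m) (hxc m)
  have hxG : ∀ n, x n ∈ er.G := by
    intro n
    induction n with
    | zero => rw [hx0]; exact er.zero_mem_G
    | succ n ih =>
        rw [hxs n]
        exact er.add_mem_G ih (er.smul_mem_G hscal
          (er.sub_mem_G cG (er.Epos_subset_G (er.sq_mem_Epos ih))))
  have h1x : ∀ n, 1 - x n ∈ er.Epos := by
    intro n
    induction n with
    | zero => rw [hx0, sub_zero]; exact er.one_mem_Epos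
    | succ n ih =>
        rw [hxs n, iter_id1]
        exact hscal _ (by norm_num) _ (er.add_mem_Epos
          (er.sq_mem_Epos (er.sub_mem_G er.one_mem_G (hxG n))) hc1)
  have hyC : ∀ n, c - x n * x n ∈ er.Epos := by
    intro n
    induction n with
    | zero => rw [hx0, mul_zero, sub_zero]; exact hc
    | succ n ih =>
        have hyx : x n * (c - x n * x n) = (c - x n * x n) * x n := by
          rw [mul_sub, sub_mul, hxc n, mul_assoc]
        have hxxc : (x n * x n) * c = c * (x n * x n) := by
          rw [mul_assoc, hxc n, ← mul_assoc, hxc n, mul_assoc]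
        have hyc : (c - x n * x n) * c = c * (c - x n * x n) := by
          rw [sub_mul, mul_sub, hxxc]
        have hid : c - x (n+1) * x (n+1)
            = (2⁻¹:ℝ) • ((c - x n * x n) * (1 - x n)
              + (c - x n * x n) * (1 - x (n+1))) := by
          have e0 : c - x (n+1) * x (n+1)
              = ((c - x n * x n) + x n * x n) - x (n+1) * x (n+1) := by abel
          rw [e0, hxs n]
          exact iter_id2 (x n) (c - x n * x n) hyx
        rw [hid]
        have m1 : (c - x n * x n) * (1 - x n) ∈ er.Epos :=
          er.mul_mem_Epos ih (h1x n) (comm_one_sub hyx.symm)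
        have m2 : (c - x n * x n) * (1 - x (n+1)) ∈ er.Epos :=
          er.mul_mem_Epos ih (h1x (n+1)) (comm_one_sub (hcomm (n+1) _ hyc))
        exact hscal _ (by norm_num) _ (er.add_mem_Epos m1 m2)
  have hxCpos : ∀ n, x n ∈ er.Epos := by
    intro n
    induction n with
    | zero => rw [hx0]; exact er.zero_mem_Epos
    | succ n ih =>
        rw [hxs n]
        exact er.add_mem_Epos ih (hscal _ (by norm_num) _ (hyC n))
  have hasc : ∀ n, er.le (x n) (x (n+1)) := by
    intro n
    rw [le_def, hxs n, add_sub_cancel_left]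
    exact hscal _ (by norm_num) _ (hyC n)
  obtain ⟨s, hsup, hscc⟩ := hCV x hxG hasc hxx ⟨1, er.one_mem_G, fun n => h1x n⟩
  have hsG : s ∈ er.G := hsup.1
  have hle : ∀ n, s - x n ∈ er.Epos := fun n => hsup.2.1 _ ⟨n, rfl⟩
  have hsC : s ∈ er.Epos := by have h := hle 0; rwa [hx0, sub_zero] at h
  have hcomms : ∀ k ∈ er.G, k * c = c * k → k * s = s * k := by
    intro k hk hkc
    have hk' : k ∈ er.commutant (Set.range x) := by
      refine ⟨hk, ?_⟩
      rintro a ⟨n, rfl⟩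
      exact hcomm n k hkc
    exact (hscc.2 k hk').symm
  have hsx : ∀ n, s * x n = x n * s := fun n =>
    hscc.2 (x n) ⟨hxG n, by rintro a ⟨m, rfl⟩; exact hxx n m⟩
  have hs1 : (1:R) - s ∈ er.Epos := by
    have := hsup.2.2 1 er.one_mem_G (by rintro a ⟨n, rfl⟩; exact h1x n)
    rwa [le_def] at this
  -- the squeeze
  set z := s * s - c with hz
  have hzG : z ∈ er.G :=
    er.sub_mem_G (er.Epos_subset_G (er.sq_mem_Epos hsG)) cG
  have i1 : ∀ n, s * s - x n * x n ∈ er.Epos := by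
    intro n
    have e1 : (s - x n) * (s + x n) = s * s - x n * x n := by
      rw [sub_mul, mul_add, mul_add, hsx n]; abel
    have e2 : (s + x n) * (s - x n) = s * s - x n * x n := by
      rw [add_mul, mul_sub, mul_sub, hsx n]; abel
    rw [← e1]
    exact er.mul_mem_Epos (hle n) (er.add_mem_Epos hsC (hxCpos n)) (e1.trans e2.symm)
  have i2 : ∀ n, (x n * x n + (2:ℝ) • (s - x n)) - s * s ∈ er.Epos := by
    intro n
    have e1 : (s - x n) * ((1 - s) + (1 - x n))
        = (x n * x n + (2:ℝ) • (s - x n)) - s * s := by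
      rw [two_smul'']
      simp only [mul_add, mul_sub, sub_mul, mul_one, one_mul]
      rw [hsx n]; abel
    have e2 : ((1 - s) + (1 - x n)) * (s - x n)
        = (x n * x n + (2:ℝ) • (s - x n)) - s * s := by
      rw [two_smul'']
      simp only [mul_add, add_mul, mul_sub, sub_mul, mul_one, one_mul]
      rw [hsx n]; abel
    rw [← e1]
    exact er.mul_mem_Epos (hle n) (er.add_mem_Epos hs1 (h1x n)) (e1.trans e2.symm)
  have hz1 : ∀ n, (2:ℝ) • (s - x n) - z ∈ er.Epos := by
    intro n
    have e : (2:ℝ) • (s - x n) - z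
        = ((x n * x n + (2:ℝ) • (s - x n)) - s * s) + (c - x n * x n) := by
      rw [hz]; abel
    rw [e]
    exact er.add_mem_Epos (i2 n) (hyC n)
  have hz2 : ∀ n, (2:ℝ) • (s - x n) + z ∈ er.Epos := by
    intro n
    have e4 : (x n * x n + (2:ℝ) • (s - x n)) - c = (2:ℝ) • (s - x (n+1)) := by
      rw [hxs n]; module
    have e : (2:ℝ) • (s - x n) + z
        = (s * s - x n * x n) + ((x n * x n + (2:ℝ) • (s - x n)) - c) := by
      rw [hz]; abel
    rw [e, e4]
    exact er.add_mem_Epos (i1 n) (hscal _ (by norm_num) _ (hle (n+1)))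
  have hub1 : ∀ n, er.le (x n) (s - (2⁻¹:ℝ) • z) := by
    intro n
    rw [le_def]
    have e : (s - (2⁻¹:ℝ) • z) - x n = (2⁻¹:ℝ) • ((2:ℝ) • (s - x n) - z) := by module
    rw [e]
    exact hscal _ (by norm_num) _ (hz1 n)
  have hub2 : ∀ n, er.le (x n) (s + (2⁻¹:ℝ) • z) := by
    intro n
    rw [le_def]
    have e : (s + (2⁻¹:ℝ) • z) - x n = (2⁻¹:ℝ) • ((2:ℝ) • (s - x n) + z) := by module
    rw [e]
    exact hscal _ (by norm_num) _ (hz2 n)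
  have hb1 : er.le s (s - (2⁻¹:ℝ) • z) := by
    refine hsup.2.2 _ (er.sub_mem_G hsG (er.smul_mem_G hscal hzG)) ?_
    rintro a ⟨n, rfl⟩; exact hub1 n
  have hb2 : er.le s (s + (2⁻¹:ℝ) • z) := by
    refine hsup.2.2 _ (er.add_mem_G hsG (er.smul_mem_G hscal hzG)) ?_
    rintro a ⟨n, rfl⟩; exact hub2 n
  have m1 : -((2⁻¹:ℝ) • z) ∈ er.Epos := by
    have := hb1; rw [le_def] at this
    rwa [show (s - (2⁻¹:ℝ) • z) - s = -((2⁻¹:ℝ) • z) by abel] at this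
  have m2 : (2⁻¹:ℝ) • z ∈ er.Epos := by
    have := hb2; rw [le_def] at this
    rwa [show (s + (2⁻¹:ℝ) • z) - s = (2⁻¹:ℝ) • z by abel] at this
  have hz0 : (2⁻¹:ℝ) • z = 0 := er.eq_zero_of_pm_mem m2 m1
  have hzz : z = 0 := by
    have : z = (2:ℝ) • ((2⁻¹:ℝ) • z) := by rw [smul_smul]; norm_num
    rw [this, hz0, smul_zero]
  exact ⟨s, hsC, sub_eq_zero.mp hzz, hcomms⟩

lemma sqrt_exists (hAH : er.IsAH)
    (hscal : ∀ l : ℝ, 0 ≤ l → ∀ a ∈ er.Epos, l • a ∈ er.Epos)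
    {c : R} (hc : c ∈ er.Epos) :
    ∃ s ∈ er.Epos, s * s = c ∧ ∀ k ∈ er.G, k * c = c * k → k * s = s * k := by
  obtain ⟨t, ht, htc⟩ := er.exists_real_bound hc
  have hc' : t⁻¹ • c ∈ er.Epos := hscal _ (by positivity) _ hc
  have h1c' : 1 - t⁻¹ • c ∈ er.Epos := by
    have h := hscal t⁻¹ (by positivity) _ htc
    rwa [smul_sub, smul_smul, inv_mul_cancel₀ ht.ne', one_smul] at h
  obtain ⟨s', hs'C, hs's, hs'comm⟩ := er.sqrt_norm hAH hscal hc' h1c'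
  refine ⟨Real.sqrt t • s', hscal _ (Real.sqrt_nonneg t) _ hs'C, ?_, ?_⟩
  · rw [smul_mul_assoc, mul_smul_comm, smul_smul, Real.mul_self_sqrt ht.le, hs's,
      smul_smul, mul_inv_cancel₀ ht.ne', one_smul]
  · intro k hk hkc
    have hkc' : k * (t⁻¹ • c) = (t⁻¹ • c) * k := by
      rw [mul_smul_comm, smul_mul_assoc, hkc]
    have h := hs'comm k hk hkc'
    rw [mul_smul_comm, smul_mul_assoc, h]

lemma sqrt_unique (hAH : er.IsAH) {s t : R} (hs : s ∈ er.Epos) (ht : t ∈ er.Epos)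
    (hcom : s * t = t * s) (hsq : s * s = t * t) : s = t := by
  have hQA := hAH.2.1
  have hsG := er.Epos_subset_G hs
  have htG := er.Epos_subset_G ht
  set w := s - t with hw
  have hwG : w ∈ er.G := er.sub_mem_G hsG htG
  have hw0 : w * (s + t) = 0 := by
    rw [hw, sub_mul, mul_add, mul_add, hsq, hcom]; abel
  have hww : w * w ∈ er.Epos := er.sq_mem_Epos hwG
  have e0 : w * w * s + w * w * t = 0 := by
    have : w * w * (s + t) = 0 := by rw [mul_assoc, hw0, mul_zero]
    rwa [mul_add] at this
  have hsw : s * w = w * s := by rw [hw, mul_sub, sub_mul, hcom]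
  have htw : t * w = w * t := by rw [hw, mul_sub, sub_mul, hcom]
  have hAmem : w * w * s ∈ er.Epos := by
    refine er.mul_mem_Epos hww hs ?_
    rw [mul_assoc, ← hsw, ← mul_assoc, ← hsw, mul_assoc]
  have hBmem : w * w * t ∈ er.Epos := by
    refine er.mul_mem_Epos hww ht ?_
    rw [mul_assoc, ← htw, ← mul_assoc, ← htw, mul_assoc]
  have hA0 : w * w * s = 0 := by
    refine er.eq_zero_of_pm_mem hAmem ?_
    have e : -(w * w * s) = w * w * t := by rw [neg_eq_iff_add_eq_zero]; exact e0
    rw [e]; exact hBmem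
  have hB0 : w * w * t = 0 := by
    refine er.eq_zero_of_pm_mem hBmem ?_
    have e : -(w * w * t) = w * w * s := by
      rw [neg_eq_iff_add_eq_zero, add_comm]; exact e0
    rw [e]; exact hAmem
  have hw3 : w * w * w = 0 := by
    have e : w * w * w = w * w * s - w * w * t := by rw [hw, mul_sub]
    rw [e, hA0, hB0, sub_zero]
  have hw4 : (w * w) * (1:R) * (w * w) = 0 := by
    rw [mul_one, show w * w * (w * w) = (w * w * w) * w by noncomm_ring, hw3, zero_mul]
  have hww0 : w * w = 0 := by
    have := (er.epos_v (w*w) hww 1 er.one_mem_Epos hw4).1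
    rwa [mul_one] at this
  have hw00 : w = 0 := by
    have h2 : w * (1:R) ^ 2 * w = 0 := by rw [one_pow, mul_one, hww0]
    have := (hQA w hwG 1 er.one_mem_G h2).1
    rwa [mul_one] at this
  rw [hw] at hw00
  exact sub_eq_zero.mp hw00

lemma sqrt_comm (hAH : er.IsAH)
    (hscal : ∀ l : ℝ, 0 ≤ l → ∀ a ∈ er.Epos, l • a ∈ er.Epos)
    {c m : R} (hc : c ∈ er.Epos) (hm : m ∈ er.Epos) (hsq : m * m = c)
    {k : R} (hk : k ∈ er.G) (hkc : k * c = c * k) : k * m = m * k := by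
  obtain ⟨s, hsC, hss, hscomm⟩ := er.sqrt_exists hAH hscal hc
  have hmc : m * c = c * m := by rw [← hsq, ← mul_assoc, mul_assoc]
  have hms : m * s = s * m := hscomm m (er.Epos_subset_G hm) hmc
  have hsm : s = m := er.sqrt_unique hAH hsC hm hms.symm (by rw [hss, hsq])
  have := hscomm k hk hkc
  rwa [hsm] at this

end ERing

/-- Packaged data extracted from a spectral projection witness. -/
def SpecData {R : Type*} [Ring R] [Algebra ℝ R] (er : ERing R)
    (g : R) (l : ℝ) (pl : R) : Prop :=
  ∃ a n q : R, a ∈ er.Epos ∧ n ∈ er.Epos ∧ q ∈ er.G ∧ q * q = q ∧ pl = 1 - q ∧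
    g - l • (1:R) = a - n ∧ a * n = 0 ∧ n * a = 0 ∧ q * a = a ∧ a * q = a ∧
    q * n = 0 ∧ n * q = 0 ∧
    (∀ h ∈ er.G, a * h = 0 → q * h = 0) ∧
    (∀ k ∈ er.G, k * g = g * k → k * a = a * k ∧ k * n = n * k ∧ k * q = q * k)

/-- Packaged data extracted from an eigenprojection witness. -/
def EigenData {R : Type*} [Ring R] [Algebra ℝ R] (er : ERing R)
    (g : R) (l : ℝ) (dl : R) : Prop :=
  ∃ q : R, q ∈ er.G ∧ q * q = q ∧ dl = 1 - q ∧
    (g - l • (1:R)) * q = g - l • (1:R) ∧ q * (g - l • (1:R)) = g - l • (1:R) ∧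
    (∀ h ∈ er.G, (g - l • (1:R)) * h = 0 → q * h = 0) ∧
    (∀ k ∈ er.G, k * g = g * k → k * q = q * k)

namespace ERing

variable {R : Type*} [Ring R] [Algebra ℝ R] (er : ERing R)

lemma specData_of (hAH : er.IsAH)
    (hscal : ∀ l : ℝ, 0 ≤ l → ∀ a ∈ er.Epos, l • a ∈ er.Epos)
    {g : R} (hg : g ∈ er.G) {l : ℝ} {pl : R} (hpl : er.IsSpecProj g l pl) :
    SpecData er g l pl := by
  classical
  have hQA := hAH.2.1
  obtain ⟨a, ⟨haG, m, ⟨hmG, hm0, hmsq⟩, haa⟩, q, hq, hpeq⟩ := hpl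
  set b := g - l • (1:R) with hb
  have hbG : b ∈ er.G := er.sub_mem_G hg (er.smul_mem_G hscal er.one_mem_G)
  have hmC : m ∈ er.Epos := by
    have := hm0; rw [le_def, sub_zero] at this; exact this
  have hmm : m * m = b * b := by
    have := hmsq; rw [pow_two, pow_two] at this; exact this
  have hbbC : b * b ∈ er.Epos := er.sq_mem_Epos hbG
  have hbbb : b * (b * b) = (b * b) * b := by rw [mul_assoc]
  have hmb : b * m = m * b := er.sqrt_comm hAH hscal hbbC hmC hmm hbG hbbb
  set n := m - a with hn
  have hnG : n ∈ er.G := er.sub_mem_G hmG haG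
  have ha2 : a = (2⁻¹:ℝ) • (m + b) := by rw [← haa, half_add']
  have hdecomp : b = a - n := by rw [hn]; rw [show a - (m - a) = (a + a) - m by abel, haa]; abel
  have hnn : n + n = m - b := by
    rw [hn, show (m - a) + (m - a) = (m + m) - (a + a) by abel, haa]; abel
  have hmb0 : (m + b) * (m - b) = 0 := by
    rw [mul_sub, add_mul, add_mul, hmm, hmb]; abel
  have hbm0 : (m - b) * (m + b) = 0 := by
    rw [sub_mul, mul_add, mul_add, hmm, hmb]; abel
  have han : a * n = 0 := by
    have e : a * n = (4⁻¹:ℝ) • ((a + a) * (n + n)) := by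
      simp only [mul_add, add_mul]; module
    rw [e, haa, hnn, hmb0, smul_zero]
  have hna : n * a = 0 := by
    have e : n * a = (4⁻¹:ℝ) • ((n + n) * (a + a)) := by
      simp only [mul_add, add_mul]; module
    rw [e, haa, hnn, hbm0, smul_zero]
  obtain ⟨haq, hqa⟩ := er.carrier_absorb hQA haG hq
  have hqG : q ∈ er.G := er.carrier_q_G hq
  have hqq : q * q = q := er.carrier_q_idem hq
  have hqC : q ∈ er.Epos := by rw [← hqq]; exact er.sq_mem_Epos hqG
  have hqn : q * n = 0 := (hq.2 n hnG).mp han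
  have hnq : n * q = 0 := er.ann_symm hQA hqG hnG hqn
  have hman : m = a + n := by rw [hn]; abel
  have hqm : q * m = a := by rw [hman, mul_add, hqa, hqn, add_zero]
  have hmq : m * q = a := by rw [hman, add_mul, haq, hnq, add_zero]
  have haC : a ∈ er.Epos := by
    have e : q * m * q = a := by rw [hqm, haq]
    rw [← e]; exact er.conj_mem_Epos hqC hmC
  have h1qG : (1:R) - q ∈ er.G := er.sub_mem_G er.one_mem_G hqG
  have h1qC : (1:R) - q ∈ er.Epos := by
    have e : (1 - q) * (1 - q) = 1 - q := by
      rw [show ((1:R) - q) * (1 - q) = 1 - q - q + q * q from by noncomm_ring, hqq]; abel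
    rw [← e]; exact er.sq_mem_Epos h1qG
  have hnC : n ∈ er.Epos := by
    have e1 : (1 - q) * m = n := by
      rw [sub_mul, one_mul, hqm, hman]; abel
    have e2 : n * (1 - q) = n := by rw [mul_sub, mul_one, hnq, sub_zero]
    have e : (1 - q) * m * (1 - q) = n := by rw [e1, e2]
    rw [← e]; exact er.conj_mem_Epos h1qC hmC
  refine ⟨a, n, q, haC, hnC, hqG, hqq, hpeq, hdecomp, han, hna, hqa, haq, hqn, hnq,
    fun h hh hah => (hq.2 h hh).mp hah, ?_⟩
  intro k hk hkg
  have hkb : k * b = b * k := by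
    rw [hb, mul_sub, sub_mul, hkg, mul_smul_comm, smul_mul_assoc, mul_one, one_mul]
  have hkbb : k * (b * b) = (b * b) * k := by
    rw [← mul_assoc, hkb, mul_assoc, hkb, ← mul_assoc]
  have hkm : k * m = m * k := er.sqrt_comm hAH hscal hbbC hmC hmm hk hkbb
  have hka : k * a = a * k := by
    rw [ha2, mul_smul_comm, smul_mul_assoc, mul_add, add_mul, hkm, hkb]
  have hkn : k * n = n * k := by
    rw [hn, mul_sub, sub_mul, hkm, hka]
  exact ⟨hka, hkn, er.carrier_commute hQA haG hq hk hka⟩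

lemma eigenData_of (hAH : er.IsAH)
    (hscal : ∀ l : ℝ, 0 ≤ l → ∀ a ∈ er.Epos, l • a ∈ er.Epos)
    {g : R} (hg : g ∈ er.G) {l : ℝ} {dl : R} (hdl : er.IsEigenProj g l dl) :
    EigenData er g l dl := by
  classical
  have hQA := hAH.2.1
  obtain ⟨q, hq, hdeq⟩ := hdl
  set b := g - l • (1:R) with hb
  have hbG : b ∈ er.G := er.sub_mem_G hg (er.smul_mem_G hscal er.one_mem_G)
  obtain ⟨hbq, hqb⟩ := er.carrier_absorb hQA hbG hq
  refine ⟨q, er.carrier_q_G hq, er.carrier_q_idem hq, hdeq, hbq, hqb,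
    fun h hh hah => (hq.2 h hh).mp hah, ?_⟩
  intro k hk hkg
  have hkb : k * b = b * k := by
    rw [hb, mul_sub, sub_mul, hkg, mul_smul_comm, smul_mul_assoc, mul_one, one_mul]
  exact er.carrier_commute hQA hbG hq hk hkb

end ERing

/-- Properties of the spectral resolution `(p_λ)` and
eigenprojections `(d_λ)` of `g` in an AH-algebra (with real scalars). -/
theorem stmt15 {R : Type*} [Ring R] [Algebra ℝ R] (er : ERing R) (hAH : er.IsAH)
    (hscal : ∀ l : ℝ, 0 ≤ l → ∀ a ∈ er.Epos, l • a ∈ er.Epos)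
    (g : R) (hg : g ∈ er.G) (p d : ℝ → R)
    (hp : ∀ l : ℝ, er.IsSpecProj g l (p l))
    (hd : ∀ l : ℝ, er.IsEigenProj g l (d l)) :
    ∀ l mu : ℝ,
      (p l ∈ er.P ∧ p l ∈ er.CC {g} ∧ d l ∈ er.P ∧ d l ∈ er.CC {g}) ∧
      (er.le (p l * g - l • p l) 0 ∧
        er.le 0 ((1 - p l) * g - l • (1 - p l))) ∧
      (l ≤ mu → er.le (p l) (p mu)) ∧
      (l < mu → er.le (d l) (p l) ∧ er.le (p l) (1 - d mu)) ∧
      (er.specU g < l → p l = 1) ∧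
      (l < er.specU g → er.le (p l) 1 ∧ p l ≠ 1) ∧
      (l < er.specL g → p l = 0) ∧
      (er.specL g < l → er.le 0 (p l) ∧ p l ≠ 0) ∧
      (l ≤ mu → ∀ q ∈ er.P, er.le q (p mu - p l) →
        er.le (l • q) (q * g * q) ∧ er.le (q * g * q) (mu • q)) := by
  have hQA := hAH.2.1
  intro l mu
  obtain ⟨a, n, q, haC, hnC, hqG, hqq, hpeq, hdec, han, hna, hqa, haq, hqn, hnq,
    hcar, hstrong⟩ := er.specData_of hAH hscal hg (hp l)
  obtain ⟨a', n', q', ha'C, hn'C, hq'G, hq'q', hp'eq, hdec', han', hna', hq'a'2, ha'q'2,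
    hq'n'2, hn'q'2, hcar', hstrong'⟩ := er.specData_of hAH hscal hg (hp mu)
  obtain ⟨ed, hedG, heded, hdeq, hedabs, hedabs', hedcar, hedstrong⟩ :=
    er.eigenData_of hAH hscal hg (hd l)
  obtain ⟨f, hfG, hff, hfeq, hfabs, hfabs', hfcar, hfstrong⟩ :=
    er.eigenData_of hAH hscal hg (hd mu)
  -- basic memberships
  have haG := er.Epos_subset_G haC
  have hnG := er.Epos_subset_G hnC
  have ha'G := er.Epos_subset_G ha'C
  have hn'G := er.Epos_subset_G hn'C
  have hqC : q ∈ er.Epos := by rw [← hqq]; exact er.sq_mem_Epos hqG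
  have hq'C : q' ∈ er.Epos := by rw [← hq'q']; exact er.sq_mem_Epos hq'G
  have hedC : ed ∈ er.Epos := by rw [← heded]; exact er.sq_mem_Epos hedG
  have hfC : f ∈ er.Epos := by rw [← hff]; exact er.sq_mem_Epos hfG
  have honeG := er.one_mem_G
  have hplG : (1:R) - q ∈ er.G := er.sub_mem_G honeG hqG
  have hplidem : ((1:R) - q) * (1 - q) = 1 - q := by
    rw [show ((1:R) - q) * (1 - q) = 1 - q - q + q * q from by noncomm_ring, hqq]; abel
  have hplC : (1:R) - q ∈ er.Epos := by rw [← hplidem]; exact er.sq_mem_Epos hplG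
  have hp'lG : (1:R) - q' ∈ er.G := er.sub_mem_G honeG hq'G
  have hp'lidem : ((1:R) - q') * (1 - q') = 1 - q' := by
    rw [show ((1:R) - q') * (1 - q') = 1 - q' - q' + q' * q' from by noncomm_ring, hq'q']; abel
  have hp'lC : (1:R) - q' ∈ er.Epos := by rw [← hp'lidem]; exact er.sq_mem_Epos hp'lG
  -- commutation with g
  obtain ⟨hga, hgn, hgq⟩ := hstrong g hg rfl
  obtain ⟨hga', hgn', hgq'⟩ := hstrong' g hg rfl
  have hged := hedstrong g hg rfl
  have hgf := hfstrong g hg rfl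
  -- pairwise commutation of the distinguished elements
  obtain ⟨hq'a, hq'n, hq'qq⟩ := hstrong q' hq'G hgq'.symm
  obtain ⟨ha'a, ha'n, ha'qq⟩ := hstrong a' ha'G hga'.symm
  obtain ⟨hn'a, hn'n, hn'qq⟩ := hstrong n' hn'G hgn'.symm
  obtain ⟨hqa', hqn', hqq'⟩ := hstrong' q hqG hgq.symm
  obtain ⟨hna', hnn', hnq'⟩ := hstrong' n hnG hgn.symm
  obtain ⟨haa', han'', haq'⟩ := hstrong' a haG hga.symm
  have heda := hstrong ed hedG hged.symm
  have hedq' := hstrong' ed hedG hged.symm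
  obtain ⟨hfa, hfn, hfq⟩ := hstrong f hfG hgf.symm
  obtain ⟨hfa', hfn', hfq'⟩ := hstrong' f hfG hgf.symm
  -- shifted elements
  have hshift : ∀ (t : ℝ) (k : R), k * g = g * k →
      k * (g - t • (1:R)) = (g - t • (1:R)) * k := by
    intro t k hk
    rw [mul_sub, sub_mul, hk, mul_smul_comm, smul_mul_assoc, mul_one, one_mul]
  have hblG : g - l • (1:R) ∈ er.G :=
    er.sub_mem_G hg (er.smul_mem_G hscal honeG)
  have hbmuG : g - mu • (1:R) ∈ er.G :=
    er.sub_mem_G hg (er.smul_mem_G hscal honeG)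
  -- products with b_l
  have hqb : q * (g - l • (1:R)) = a := by rw [hdec, mul_sub, hqa, hqn, sub_zero]
  have hbq : (g - l • (1:R)) * q = a := by rw [hdec, sub_mul, haq, hnq, sub_zero]
  have hq'b' : q' * (g - mu • (1:R)) = a' := by
    rw [hdec', mul_sub, hq'a'2, hq'n'2, sub_zero]
  have hb'q' : (g - mu • (1:R)) * q' = a' := by
    rw [hdec', sub_mul, ha'q'2, hn'q'2, sub_zero]
  have hplb : ((1:R) - q) * (g - l • (1:R)) = -n := by
    rw [hdec, sub_mul, one_mul, mul_sub, hqa, hqn, sub_zero]; abel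
  have hblp : (g - l • (1:R)) * ((1:R) - q) = -n := by
    rw [hdec, mul_sub, mul_one, sub_mul, haq, hnq, sub_zero]; abel
  have hp'b' : ((1:R) - q') * (g - mu • (1:R)) = -n' := by
    rw [hdec', sub_mul, one_mul, mul_sub, hq'a'2, hq'n'2, sub_zero]; abel
  have hb'p' : (g - mu • (1:R)) * ((1:R) - q') = -n' := by
    rw [hdec', mul_sub, mul_one, sub_mul, ha'q'2, hn'q'2, sub_zero]; abel
  -- the difference of the two shifts
  have hbb : g - mu • (1:R) = (g - l • (1:R)) - (mu - l) • (1:R) := by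
    rw [sub_smul]; abel
  -- decomposition of g and scalar bounds
  obtain ⟨u, huC, v, hvC, hguv⟩ := id hg
  obtain ⟨t0, ht0pos, ht0⟩ := er.exists_real_bound huC
  obtain ⟨t1, ht1pos, ht1⟩ := er.exists_real_bound hvC
  have hgS : er.le g (t0 • (1:R)) := by
    show t0 • (1:R) - g ∈ er.Epos
    rw [hguv, show t0 • (1:R) - (u - v) = (t0 • (1:R) - u) + v from by abel]
    exact er.add_mem_Epos ht0 hvC
  have hgS' : er.le ((-t1) • (1:R)) g := by
    show g - (-t1) • (1:R) ∈ er.Epos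
    rw [hguv, neg_smul, sub_neg_eq_add,
      show u - v + t1 • (1:R) = (t1 • (1:R) - v) + u from by abel]
    exact er.add_mem_Epos ht1 huC
  -- the key comparison fact
  have hq'q_of : l ≤ mu → q' * q = q' := by
    intro hlmu
    have hbmur : (g - mu • (1:R)) * (1 - q) = -n - (mu - l) • (1 - q) := by
      rw [hbb, sub_mul, hblp, smul_mul_assoc, one_mul]
    have ha'r : a' * (1 - q) = -(q' * n) - (mu - l) • (q' * (1 - q)) := by
      rw [← hq'b', mul_assoc, hbmur, mul_sub, mul_neg, mul_smul_comm]
    have hcomm1 : a' * (1 - q) = (1 - q) * a' := comm_one_sub ha'qq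
    have m1 : a' * (1 - q) ∈ er.Epos := er.mul_mem_Epos ha'C hplC hcomm1
    have m2 : -(a' * (1 - q)) ∈ er.Epos := by
      rw [ha'r, show -(-(q' * n) - (mu - l) • (q' * (1 - q)))
        = q' * n + (mu - l) • (q' * (1 - q)) from by abel]
      exact er.add_mem_Epos (er.mul_mem_Epos hq'C hnC hq'n)
        (hscal _ (by linarith) _ (er.mul_mem_Epos hq'C hplC (comm_one_sub hq'qq)))
    have h0 := er.eq_zero_of_pm_mem m1 m2
    have h1 := hcar' _ hplG h0
    rw [mul_sub, mul_one, sub_eq_zero] at h1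
    exact h1.symm
  refine ⟨?_, ?_, ?_, ?_, ?_, ?_, ?_, ?_, ?_⟩
  · -- (1) projections and double commutants
    have hCCp : p l ∈ er.CC {g} := by
      refine ⟨by rw [hpeq]; exact hplG, ?_⟩
      rintro k ⟨hkG, hkg⟩
      have hkg' : k * g = g * k := hkg g rfl
      have hkq := (hstrong k hkG hkg').2.2
      rw [hpeq, sub_mul, mul_sub, one_mul, mul_one, hkq]
    have hCCd : d l ∈ er.CC {g} := by
      refine ⟨by rw [hdeq]; exact er.sub_mem_G honeG hedG, ?_⟩
      rintro k ⟨hkG, hkg⟩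
      have hkg' : k * g = g * k := hkg g rfl
      have hke := hedstrong k hkG hkg'
      rw [hdeq, sub_mul, mul_sub, one_mul, mul_one, hke]
    refine ⟨⟨by rw [hpeq]; exact hplG, ?_⟩, hCCp,
      ⟨by rw [hdeq]; exact er.sub_mem_G honeG hedG, ?_⟩, hCCd⟩
    · rw [hpeq, pow_two, hplidem]
    · rw [hdeq, pow_two,
        show ((1:R) - ed) * (1 - ed) = 1 - ed - ed + ed * ed from by noncomm_ring,
        heded]
      abel
  · -- (2) the defining inequalities
    constructor
    · show (0:R) - (p l * g - l • p l) ∈ er.Epos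
      have e1 : p l * g - l • p l = ((1:R) - q) * (g - l • 1) := by
        rw [hpeq, mul_sub, mul_smul_comm, mul_one]
      rw [e1, hplb, show (0:R) - -n = n from by abel]
      exact hnC
    · show ((1:R) - p l) * g - l • (1 - p l) - 0 ∈ er.Epos
      have e0 : (1:R) - p l = q := by rw [hpeq, sub_sub_cancel]
      have e1 : q * g - l • q = q * (g - l • 1) := by
        rw [mul_sub, mul_smul_comm, mul_one]
      rw [e0, sub_zero, e1, hqb]
      exact haC
  · -- (3) monotonicity
    intro hlmu
    have hq'q := hq'q_of hlmu
    show p mu - p l ∈ er.Epos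
    have e : p mu - p l = (1 - q') * q * (1 - q') := by
      have e2 : ((1:R) - q') * q * (1 - q')
          = q - q * q' - q' * q + q' * q * q' := by noncomm_ring
      rw [e2, hq'q, hqq', hq'q, hq'q', hp'eq, hpeq]
      abel
    rw [e]
    exact er.conj_mem_Epos hp'lC hqC
  · -- (4) eigenprojections squeeze
    intro hlt
    constructor
    · show p l - d l ∈ er.Epos
      have hble : (g - l • (1:R)) * (1 - ed) = 0 := by
        rw [mul_sub, mul_one, hedabs, sub_self]
      have ha1e : a * (1 - ed) = 0 := by rw [← hqb, mul_assoc, hble, mul_zero]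
      have hq1e : q * (1 - ed) = 0 := hcar _ (er.sub_mem_G honeG hedG) ha1e
      have hqe : q * ed = q := by
        rw [mul_sub, mul_one, sub_eq_zero] at hq1e; exact hq1e.symm
      have e : p l - d l = (1 - q) * ed * (1 - q) := by
        have e2 : ((1:R) - q) * ed * (1 - q)
            = ed - q * ed - ed * q + q * ed * q := by noncomm_ring
        rw [e2, hqe, heda.2.2, hqe, hqq, hpeq, hdeq]
        abel
      rw [e]
      exact er.conj_mem_Epos hplC hedC
    · show (1 - d mu) - p l ∈ er.Epos
      have hfq' : f * q = q * f := hfq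
      have h1 : q * (1 - f) = (1 - f) * q := comm_one_sub hfq'.symm
      have hzcomm : (1 - f) * (1 - q) = (1 - q) * (1 - f) := comm_one_sub h1.symm
      have hzC : (1 - f) * (1 - q) ∈ er.Epos := by
        refine er.mul_mem_Epos ?_ hplC hzcomm
        rw [← show ((1:R) - f) * (1 - f) = 1 - f from by
          rw [show ((1:R) - f) * (1 - f) = 1 - f - f + f * f from by noncomm_ring, hff]; abel]
        exact er.sq_mem_Epos (er.sub_mem_G honeG hfG)
      have hfb : ((1:R) - f) * (g - mu • (1:R)) = 0 := by
        rw [sub_mul, one_mul, hfabs', sub_self]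
      have h1qg : ((1:R) - q) * g = g * (1 - q) := by
        rw [sub_mul, mul_sub, one_mul, mul_one, hgq]
      have hzbmu : ((1:R) - f) * (1 - q) * (g - mu • (1:R)) = 0 := by
        rw [mul_assoc, hshift mu (1 - q) h1qg, ← mul_assoc, hfb, zero_mul]
      have hzbl : ((1:R) - f) * (1 - q) * (g - l • (1:R)) = -((1 - f) * n) := by
        rw [mul_assoc, hplb, mul_neg]
      have hmz : (mu - l) • ((1 - f) * (1 - q)) = -((1 - f) * n) := by
        have e3 : ((1:R) - f) * (1 - q) * (g - l • (1:R))
            = (1 - f) * (1 - q) * (g - mu • (1:R))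
              + (mu - l) • ((1 - f) * (1 - q)) := by
          rw [show g - l • (1:R) = (g - mu • (1:R)) + (mu - l) • (1:R) from by
            rw [sub_smul]; abel]
          rw [mul_add, mul_smul_comm, mul_one]
        rw [hzbmu, zero_add] at e3
        rw [← e3, hzbl]
      have hnf : ((1:R) - f) * n = n * (1 - f) := (comm_one_sub hfn.symm).symm
      have hmz0 : (mu - l) • ((1 - f) * (1 - q)) = 0 := by
        refine er.eq_zero_of_pm_mem (hscal _ (by linarith) _ hzC) ?_
        rw [hmz, neg_neg]
        exact er.mul_mem_Epos (by
          rw [← show ((1:R) - f) * (1 - f) = 1 - f from by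
            rw [show ((1:R) - f) * (1 - f) = 1 - f - f + f * f from by noncomm_ring, hff]; abel]
          exact er.sq_mem_Epos (er.sub_mem_G honeG hfG)) hnC hnf
      have hz0 : ((1:R) - f) * (1 - q) = 0 := by
        have e4 : ((1:R) - f) * (1 - q)
            = (mu - l)⁻¹ • ((mu - l) • ((1 - f) * (1 - q))) := by
          rw [smul_smul, inv_mul_cancel₀ (by linarith : mu - l ≠ 0), one_smul]
        rw [e4, hmz0, smul_zero]
      have hfp : (1:R) - q = f * (1 - q) := by
        rw [sub_mul, one_mul, sub_eq_zero] at hz0; exact hz0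
      have e5 : (1 - d mu) - p l = f * q := by
        rw [hfeq, hpeq, sub_sub_cancel,
          show f - (1 - q) = f - f * (1 - q) from by rw [← hfp],
          mul_sub, mul_one]
        abel
      rw [e5]
      exact er.mul_mem_Epos hfC hqC hfq
  · -- (5) above the upper spectral bound
    intro hU
    obtain ⟨t, htS, htl⟩ :=
      exists_lt_of_csInf_lt (⟨t0, hgS⟩ : Set.Nonempty {t : ℝ | er.le g (t • (1:R))}) hU
    have htS' : t • (1:R) - g ∈ er.Epos := htS
    have hqg2 : q * g = a + l • q := by
      have e : q * g = q * ((g - l • (1:R)) + l • (1:R)) := by rw [sub_add_cancel]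
      rw [e, mul_add, hqb, mul_smul_comm, mul_one]
    have key : q * (t • (1:R) - g) * q = (t - l) • q - a := by
      rw [mul_sub, mul_smul_comm, mul_one, hqg2, sub_mul, smul_mul_assoc, hqq,
        add_mul, haq, smul_mul_assoc, hqq, sub_smul]
      abel
    have m1 : (t - l) • q - a ∈ er.Epos := by
      rw [← key]; exact er.conj_mem_Epos hqC htS'
    have m2 : -a ∈ er.Epos := by
      rw [show -a = ((t - l) • q - a) + (l - t) • q from by
        rw [sub_smul, sub_smul]; abel]
      exact er.add_mem_Epos m1 (hscal _ (by linarith) _ hqC)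
    have haz : a = 0 := er.eq_zero_of_pm_mem haC m2
    have hq0 : q = 0 := by
      have h1 := hcar 1 honeG (by rw [haz, zero_mul])
      rwa [mul_one] at h1
    rw [hpeq, hq0, sub_zero]
  · -- (6) below the upper spectral bound
    intro hU
    constructor
    · show (1:R) - p l ∈ er.Epos
      rw [hpeq, sub_sub_cancel]; exact hqC
    · intro hp1
      have hq0 : q = 0 := by
        rw [hpeq] at hp1
        exact sub_eq_self.mp hp1
      have haz : a = 0 := by rw [← hqb, hq0, zero_mul]
      have hmem : er.le g (l • (1:R)) := by
        show l • (1:R) - g ∈ er.Epos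
        have e : g - l • (1:R) = -n := by rw [hdec, haz, zero_sub]
        rw [show l • (1:R) - g = -(g - l • (1:R)) from by abel, e, neg_neg]
        exact hnC
      have hbdd : BddBelow {t : ℝ | er.le g (t • (1:R))} := by
        refine ⟨-t1, ?_⟩
        intro t ht
        by_contra hcon
        push_neg at hcon
        have hmem2 : (t + t1) • (1:R) ∈ er.Epos := by
          rw [show (t + t1) • (1:R) = (t • (1:R) - g) + ((t1 • (1:R) - v) + u) from by
            rw [hguv, add_smul]; abel]
          exact er.add_mem_Epos ht (er.add_mem_Epos ht1 huC)
        have hneg : -((t + t1) • (1:R)) ∈ er.Epos := by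
          rw [← neg_smul]
          exact hscal _ (by linarith) _ er.one_mem_Epos
        have := er.smul_one_eq_zero (er.eq_zero_of_pm_mem hmem2 hneg)
        linarith
      have : er.specU g ≤ l := csInf_le hbdd hmem
      linarith
  · -- (7) below the lower spectral bound
    intro hL
    obtain ⟨t, htS, hlt⟩ :=
      exists_lt_of_lt_csSup (⟨-t1, hgS'⟩ : Set.Nonempty {t : ℝ | er.le (t • (1:R)) g}) hL
    have htS' : g - t • (1:R) ∈ er.Epos := htS
    have hplg : ((1:R) - q) * g = -n + l • (1 - q) := by
      have e : ((1:R) - q) * g = (1 - q) * ((g - l • (1:R)) + l • (1:R)) := by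
        rw [sub_add_cancel]
      rw [e, mul_add, hplb, mul_smul_comm, mul_one]
    have hA : ((1:R) - q) * (g - t • (1:R)) = -n - (t - l) • (1 - q) := by
      rw [mul_sub, mul_smul_comm, mul_one, hplg, sub_smul]; abel
    have key : ((1:R) - q) * (g - t • (1:R)) * (1 - q)
        = -n - (t - l) • (1 - q) := by
      rw [hA, sub_mul, neg_mul,
        show n * ((1:R) - q) = n from by rw [mul_sub, mul_one, hnq, sub_zero],
        smul_mul_assoc, hplidem]
    have m1 : -n - (t - l) • (1 - q) ∈ er.Epos := by
      rw [← key]; exact er.conj_mem_Epos hplC htS'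
    have m2 : -((t - l) • ((1:R) - q)) ∈ er.Epos := by
      rw [show -((t - l) • ((1:R) - q)) = n + (-n - (t - l) • (1 - q)) from by abel]
      exact er.add_mem_Epos hnC m1
    have hz0 : (t - l) • ((1:R) - q) = 0 :=
      er.eq_zero_of_pm_mem (hscal _ (by linarith) _ hplC) m2
    have hp0 : (1:R) - q = 0 := by
      have e4 : (1:R) - q = (t - l)⁻¹ • ((t - l) • ((1:R) - q)) := by
        rw [smul_smul, inv_mul_cancel₀ (by linarith : t - l ≠ 0), one_smul]
      rw [e4, hz0, smul_zero]
    rw [hpeq, hp0]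
  · -- (8) above the lower spectral bound
    intro hL
    constructor
    · show p l - 0 ∈ er.Epos
      rw [sub_zero, hpeq]; exact hplC
    · intro hp0
      have hq1 : q = 1 := by
        rw [hpeq] at hp0
        have := sub_eq_zero.mp hp0; exact this.symm
      have hn0 : n = 0 := by
        have e : n = n * q := by rw [hq1, mul_one]
        rw [e, hnq]
      have hmem : er.le (l • (1:R)) g := by
        show g - l • (1:R) ∈ er.Epos
        rw [hdec, hn0, sub_zero]; exact haC
      have hbdd : BddAbove {t : ℝ | er.le (t • (1:R)) g} := by
        refine ⟨t0, ?_⟩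
        intro t ht
        by_contra hcon
        push_neg at hcon
        have hmem2 : (t0 - t) • (1:R) ∈ er.Epos := by
          rw [show (t0 - t) • (1:R) = (t0 • (1:R) - g) + (g - t • (1:R)) from by
            rw [sub_smul]; abel]
          exact er.add_mem_Epos hgS ht
        have hneg : -((t0 - t) • (1:R)) ∈ er.Epos := by
          rw [← neg_smul]
          exact hscal _ (by linarith) _ er.one_mem_Epos
        have := er.smul_one_eq_zero (er.eq_zero_of_pm_mem hmem2 hneg)
        linarith
      have : l ≤ er.specL g := le_csSup hbdd hmem
      linarith
  · -- (9) compression bounds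
    intro hlmu w hw hwle
    obtain ⟨hwG, hwidem⟩ := hw
    have hww : w * w = w := by rw [← pow_two, ← hwidem]
    have hwC : w ∈ er.Epos := by rw [← hww]; exact er.sq_mem_Epos hwG
    have hq'q := hq'q_of hlmu
    have hqq'e : q * q' = q' := by rw [hqq', hq'q]
    have hevidem : (q - q') * (q - q') = q - q' := by
      rw [show (q - q') * (q - q') = q * q - q * q' - q' * q + q' * q' from by
        noncomm_ring, hqq, hqq'e, hq'q, hq'q']
      abel
    have hevG : q - q' ∈ er.G := er.sub_mem_G hqG hq'G
    have hevC : q - q' ∈ er.Epos := by rw [← hevidem]; exact er.sq_mem_Epos hevG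
    have h1evG : (1:R) - (q - q') ∈ er.G := er.sub_mem_G honeG hevG
    have h1evidem : ((1:R) - (q - q')) * (1 - (q - q')) = 1 - (q - q') := by
      rw [show ((1:R) - (q - q')) * (1 - (q - q'))
        = 1 - (q - q') - (q - q') + (q - q') * (q - q') from by noncomm_ring, hevidem]
      abel
    have h1evC : (1:R) - (q - q') ∈ er.Epos := by
      rw [← h1evidem]; exact er.sq_mem_Epos h1evG
    have hevw : (q - q') - w ∈ er.Epos := by
      have h := hwle
      rwa [show p mu - p l = q - q' from by rw [hp'eq, hpeq]; abel] at h
    have habs0 : ((1:R) - (q - q')) * w * (1 - (q - q')) = 0 := by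
      refine er.eq_zero_of_pm_mem (er.conj_mem_Epos h1evC hwC) ?_
      have e0 : ((1:R) - (q - q')) * (q - q') = 0 := by
        rw [sub_mul, one_mul, hevidem, sub_self]
      have e : -(((1:R) - (q - q')) * w * (1 - (q - q')))
          = (1 - (q - q')) * ((q - q') - w) * (1 - (q - q')) := by
        rw [mul_sub ((1:R) - (q - q')) (q - q') w, e0, zero_sub, neg_mul]
      rw [e]
      exact er.conj_mem_Epos h1evC hevw
    have hq2 : ((1:R) - (q - q')) * w ^ 2 * (1 - (q - q')) = 0 := by
      rw [← hwidem]; exact habs0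
    obtain ⟨h1evw, hw1ev⟩ := hQA (1 - (q - q')) h1evG w hwG hq2
    have hevww : (q - q') * w = w := by
      rw [sub_mul, one_mul, sub_eq_zero] at h1evw; exact h1evw.symm
    have hwev : w * (q - q') = w := by
      rw [mul_sub, mul_one, sub_eq_zero] at hw1ev; exact hw1ev.symm
    have hevg : (q - q') * g = g * (q - q') := by
      rw [sub_mul, mul_sub, hgq, hgq']
    have hq'n0 : q' * n = 0 := by rw [← hq'q, mul_assoc, hqn, mul_zero]
    have hqa'e : q * a' = a' := by
      rw [← hq'a'2, ← mul_assoc, hqq'e, hq'a'2]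
    have hqn'0 : q * n' = q * n' := rfl
    -- ev * b_l = (1 - q') * a
    have hevbl2 : (q - q') * (g - l • (1:R)) = (1 - q') * a := by
      rw [hdec, show (q - q') * (a - n) = q * a - q * n - q' * a + q' * n from by
        noncomm_ring, hqa, hqn, hq'n0, sub_mul, one_mul]
      abel
    -- ev * b_mu = -(q * n')
    have hevbmu2 : (q - q') * (g - mu • (1:R)) = -(q * n') := by
      rw [hdec', show (q - q') * (a' - n') = q * a' - q * n' - q' * a' + q' * n' from by
        noncomm_ring, hqa'e, hq'a'2, hq'n'2]
      abel
    have hw1 : (1 - q') * a ∈ er.Epos :=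
      er.mul_mem_Epos hp'lC haC (comm_one_sub haq').symm
    have hw2 : q * n' ∈ er.Epos := er.mul_mem_Epos hqC hn'C hqn'
    have hsand : ∀ X : R, X * (q - q') = (q - q') * X →
        w * X * w = w * ((q - q') * X) * w := by
      intro X hX
      calc w * X * w = (w * (q - q')) * X * ((q - q') * w) := by rw [hwev, hevww]
      _ = w * ((q - q') * (X * (q - q'))) * w := by noncomm_ring
      _ = w * ((q - q') * ((q - q') * X)) * w := by rw [hX]
      _ = w * (((q - q') * (q - q')) * X) * w := by noncomm_ring
      _ = w * ((q - q') * X) * w := by rw [hevidem]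
    constructor
    · show w * g * w - l • w ∈ er.Epos
      have e1 : w * g * w - l • w = w * (g - l • (1:R)) * w := by
        rw [mul_sub, sub_mul, mul_smul_comm, mul_one, smul_mul_assoc, hww]
      rw [e1, hsand _ ((hshift l _ hevg).symm), hevbl2]
      exact er.conj_mem_Epos hwC hw1
    · show mu • w - w * g * w ∈ er.Epos
      have e1 : mu • w - w * g * w = -(w * (g - mu • (1:R)) * w) := by
        rw [mul_sub, sub_mul, mul_smul_comm, mul_one, smul_mul_assoc, hww]
        abel
      rw [e1, hsand _ ((hshift mu _ hevg).symm), hevbmu2,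
        show w * -(q * n') * w = -(w * (q * n') * w) from by
          rw [mul_neg, neg_mul], neg_neg]
      exact er.conj_mem_Epos hwC hw2
end

section
/- Let G be an AH-algebra, let g ∈ G with spectral bounds L := L_g and U := U_g and spectral resolution (p_λ)_{λ∈ℝ}. Suppose λ₀,λ₁,…,λ_n ∈ ℝ with λ₀ < L < λ₁ < ⋯ < λ_{n−1} < U < λ_n, let γ_i ∈ ℝ with λ_{i−1} ≤ γ_i ≤ λ_i for i = 1,…,n, put u_i := p_{λ_i} − p_{λ_{i−1}}, and let ε := max{λ_i − λ_{i−1} : i = 1,…,n}. Then u₁,…,u_n ∈ P ∩ CC(g), u₁ + u₂ + ⋯ + u_n = 1, and ‖g − Σ_{i=1}^{n} γ_i u_i‖ ≤ ε. -/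
set_option linter.unusedSectionVars false
set_option maxHeartbeats 1000000

namespace ERingProof

open ERing Polynomial

variable {R : Type*} [Ring R] [Algebra ℝ R] {er : ERing R}

/-! ### Basic positivity lemmas -/

lemma epos_zero : (0:R) ∈ er.Epos := (AddSubmonoid.closure er.E).zero_mem

lemma epos_add {a b : R} (ha : a ∈ er.Epos) (hb : b ∈ er.Epos) : a + b ∈ er.Epos :=
  (AddSubmonoid.closure er.E).add_mem ha hb

lemma epos_of_E {e : R} (he : e ∈ er.E) : e ∈ er.Epos := AddSubmonoid.subset_closure he

lemma epos_one : (1:R) ∈ er.Epos := epos_of_E er.one_mem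

lemma epos_cancel {a : R} (h1 : a ∈ er.Epos) (h2 : -a ∈ er.Epos) : a = 0 :=
  er.epos_i a h1 h2

/-- a+b = 0 with both positive forces both zero. -/
lemma epos_sum_zero {a b : R} (ha : a ∈ er.Epos) (hb : b ∈ er.Epos) (h : a + b = 0) :
    a = 0 ∧ b = 0 := by
  have hna : -a = b := neg_eq_of_add_eq_zero_right h
  have ha0 : a = 0 := epos_cancel ha (hna ▸ hb)
  exact ⟨ha0, by rw [ha0, zero_add] at h; exact h⟩

lemma epos_mul {a b : R} (ha : a ∈ er.Epos) (hb : b ∈ er.Epos) (h : a * b = b * a) :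
    a * b ∈ er.Epos := er.epos_iii a ha b hb h

lemma epos_conj {a b : R} (ha : a ∈ er.Epos) (hb : b ∈ er.Epos) : a * b * a ∈ er.Epos :=
  er.epos_iv a ha b hb

section scal
variable (hscal : ∀ l : ℝ, 0 ≤ l → ∀ a ∈ er.Epos, l • a ∈ er.Epos)
include hscal

lemma epos_smul {l : ℝ} (hl : 0 ≤ l) {a : R} (ha : a ∈ er.Epos) : l • a ∈ er.Epos :=
  hscal l hl a ha

lemma epos_smul_one {l : ℝ} (hl : 0 ≤ l) : l • (1:R) ∈ er.Epos :=
  hscal l hl 1 epos_one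

/-- Cancel a positive scalar factor. -/
lemma epos_unsmul {l : ℝ} (hl : 0 < l) {a : R} (ha : l • a ∈ er.Epos) : a ∈ er.Epos := by
  have := hscal l⁻¹ (by positivity) _ ha
  rwa [smul_smul, inv_mul_cancel₀ (ne_of_gt hl), one_smul] at this

end scal

/-! ### The directed group G -/

lemma epos_sub_G {a : R} (ha : a ∈ er.Epos) : a ∈ er.G := ⟨a, ha, 0, epos_zero, (sub_zero a).symm⟩

lemma G_zero : (0:R) ∈ er.G := epos_sub_G epos_zero

lemma G_one : (1:R) ∈ er.G := epos_sub_G epos_one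

lemma G_add {x y : R} (hx : x ∈ er.G) (hy : y ∈ er.G) : x + y ∈ er.G := by
  obtain ⟨a, ha, b, hb, rfl⟩ := hx
  obtain ⟨c, hc, d, hd, rfl⟩ := hy
  exact ⟨a + c, epos_add ha hc, b + d, epos_add hb hd, by abel⟩

lemma G_neg {x : R} (hx : x ∈ er.G) : -x ∈ er.G := by
  obtain ⟨a, ha, b, hb, rfl⟩ := hx
  exact ⟨b, hb, a, ha, by abel⟩

lemma G_sub {x y : R} (hx : x ∈ er.G) (hy : y ∈ er.G) : x - y ∈ er.G := by
  have := G_add hx (G_neg hy); rwa [← sub_eq_add_neg] at this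

/-- Squares of elements of G are positive. -/
lemma epos_sq {x : R} (hx : x ∈ er.G) : x * x ∈ er.Epos := by
  obtain ⟨a, ha, b, hb, rfl⟩ := hx
  have := er.epos_vi a ha b hb
  rwa [pow_two] at this

lemma G_smul (hscal : ∀ l : ℝ, 0 ≤ l → ∀ a ∈ er.Epos, l • a ∈ er.Epos)
    (l : ℝ) {x : R} (hx : x ∈ er.G) : l • x ∈ er.G := by
  obtain ⟨a, ha, b, hb, rfl⟩ := hx
  rcases le_or_gt 0 l with hl | hl
  · exact ⟨l • a, hscal l hl a ha, l • b, hscal l hl b hb, by rw [smul_sub]⟩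
  · refine ⟨(-l) • b, hscal (-l) (by linarith) b hb, (-l) • a, hscal (-l) (by linarith) a ha, ?_⟩
    rw [smul_sub]; module

/-- Jordan product closure: xy + yx ∈ G. -/
lemma G_jordan {x y : R} (hx : x ∈ er.G) (hy : y ∈ er.G) : x * y + y * x ∈ er.G := by
  have h1 : (x + y) * (x + y) - x * x - y * y = x * y + y * x := by noncomm_ring
  have := G_sub (G_sub (epos_sub_G (epos_sq (G_add hx hy))) (epos_sub_G (epos_sq hx)))
    (epos_sub_G (epos_sq hy))
  rwa [h1] at this

/-- Commuting products stay in G. -/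
lemma G_mul_comm (hscal : ∀ l : ℝ, 0 ≤ l → ∀ a ∈ er.Epos, l • a ∈ er.Epos)
    {x y : R} (hx : x ∈ er.G) (hy : y ∈ er.G) (h : x * y = y * x) : x * y ∈ er.G := by
  have := G_smul hscal (1/2 : ℝ) (G_jordan hx hy)
  have h2 : (1/2 : ℝ) • (x * y + y * x) = x * y := by rw [← h]; module
  rwa [h2] at this

/-- aba ∈ G for a, b ∈ G. -/
lemma G_aba (hscal : ∀ l : ℝ, 0 ≤ l → ∀ a ∈ er.Epos, l • a ∈ er.Epos)
    {x y : R} (hx : x ∈ er.G) (hy : y ∈ er.G) : x * y * x ∈ er.G := by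
  have h1 := G_jordan hx (G_jordan hx hy)
  have h2 := G_jordan (epos_sub_G (epos_sq hx)) hy
  have key : x * y * x = (1/2 : ℝ) • ((x * (x * y + y * x) + (x * y + y * x) * x)
      - ((x * x) * y + y * (x * x))) := by
    have e : (x * (x * y + y * x) + (x * y + y * x) * x) - ((x * x) * y + y * (x * x))
        = x * y * x + x * y * x := by noncomm_ring
    rw [e]; module
  rw [key]
  exact G_smul hscal _ (G_sub h1 h2)

/-! ### Order lemmas -/

lemma le_def {x y : R} : er.le x y ↔ y - x ∈ er.Epos := Iff.rfl

/-! ### Consequences of QA -/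

section QA
variable (hQA : er.HasQA)
include hQA

/-- An element of G with zero square is zero. -/
lemma sq_zero {x : R} (hx : x ∈ er.G) (h : x * x = 0) : x = 0 := by
  have := (hQA 1 G_one x hx (by rw [pow_two]; simp [h])).1
  rwa [one_mul] at this

/-- Zero products in G are two-sided. -/
lemma mul_zero_symm {x y : R} (hx : x ∈ er.G) (hy : y ∈ er.G) (h : x * y = 0) : y * x = 0 := by
  have h2 : x * y ^ 2 * x = 0 := by
    rw [pow_two, show x * (y * y) * x = (x * y) * (y * x) by noncomm_ring, h, zero_mul]
  exact (hQA x hx y hy h2).2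

end QA

/-! ### Bounds by the order unit -/

lemma epos_bound {a : R} (ha : a ∈ er.Epos) : ∃ K : ℝ, 0 ≤ K ∧ K • (1:R) - a ∈ er.Epos := by
  induction ha using AddSubmonoid.closure_induction with
  | mem e he =>
      exact ⟨1, zero_le_one, by rw [one_smul]; exact epos_of_E (er.compl_mem e he)⟩
  | zero => exact ⟨0, le_refl _, by simpa using epos_zero⟩
  | add x y _ _ hx hy =>
      obtain ⟨K1, hK1, h1⟩ := hx
      obtain ⟨K2, hK2, h2⟩ := hy
      refine ⟨K1 + K2, by linarith, ?_⟩
      have := epos_add h1 h2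
      have e : K1 • (1:R) - x + (K2 • (1:R) - y) = (K1 + K2) • (1:R) - (x + y) := by
        rw [add_smul]; abel
      rwa [e] at this

lemma G_bound (hscal : ∀ l : ℝ, 0 ≤ l → ∀ a ∈ er.Epos, l • a ∈ er.Epos) {x : R} (hx : x ∈ er.G) :
    ∃ K : ℝ, 0 ≤ K ∧ K • (1:R) - x ∈ er.Epos ∧ x + K • (1:R) ∈ er.Epos := by
  obtain ⟨a, ha, b, hb, rfl⟩ := hx
  obtain ⟨K1, hK1, h1⟩ := epos_bound ha
  obtain ⟨K2, hK2, h2⟩ := epos_bound hb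
  refine ⟨K1 + K2, by linarith, ?_, ?_⟩
  · have := epos_add (epos_add h1 hb) (epos_smul_one hscal hK2)
    have e : K1 • (1:R) - a + b + K2 • (1:R) = (K1+K2) • (1:R) - (a - b) := by
      rw [add_smul]; abel
    rwa [e] at this
  · have := epos_add (epos_add ha h2) (epos_smul_one hscal hK1)
    have e : a + (K2 • (1:R) - b) + K1 • (1:R) = a - b + (K1+K2) • (1:R) := by
      rw [add_smul]; abel
    rwa [e] at this

/-- Positive scalars embed: if l•1 ∈ Epos and l < 0 then contradiction. -/
lemma scal_nonneg (hscal : ∀ l : ℝ, 0 ≤ l → ∀ a ∈ er.Epos, l • a ∈ er.Epos)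
    {l : ℝ} (h : l • (1:R) ∈ er.Epos) : 0 ≤ l := by
  by_contra hneg
  push_neg at hneg
  have h2 : -(l • (1:R)) ∈ er.Epos := by
    have := epos_smul_one hscal (le_of_lt (neg_pos.mpr hneg))
    rwa [neg_smul] at this
  have := epos_cancel h h2
  have h1 : (1:R) = 0 := by
    have := congrArg (fun z => l⁻¹ • z) this
    simpa [smul_smul, inv_mul_cancel₀ (ne_of_lt hneg)] using this
  exact er.zero_ne_one h1.symm

end ERingProof
set_option linter.unusedTactic false
namespace ERingProof

open ERing Polynomial

variable {R : Type*} [Ring R] [Algebra ℝ R] {er : ERing R}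

/-! ### Archimedean property from the commutative Vigier property -/

lemma arch (hCV : er.HasCV) (hscal : ∀ l : ℝ, 0 ≤ l → ∀ a ∈ er.Epos, l • a ∈ er.Epos)
    {x : R} (hx : x ∈ er.Epos) {c : ℝ}
    (hb : ∀ n : ℕ, c • (1:R) - ((n:ℝ)+1) • x ∈ er.Epos) : x = 0 := by
  set f : ℕ → R := fun n => ((n:ℝ)+1) • x with hf
  have hxG : x ∈ er.G := epos_sub_G hx
  have hstep : ∀ n, f (n+1) - f n = x := by
    intro n; simp only [hf]; push_cast; module
  obtain ⟨s, hsup, -⟩ := hCV f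
    (fun n => G_smul hscal _ hxG)
    (fun n => by show f (n+1) - f n ∈ er.Epos; rw [hstep]; exact hx)
    (fun m n => by
      simp only [hf, smul_mul_assoc, mul_smul_comm, smul_smul]; rw [mul_comm])
    ⟨c • (1:R), by
      have : c • (1:R) ∈ er.Epos := by
        have := epos_add (hb 0) (by simpa using hx)
        simpa using this
      exact epos_sub_G this,
      fun n => hb n⟩
  have hub : ∀ a ∈ Set.range f, er.le a (s - x) := by
    rintro a ⟨n, rfl⟩
    have h1 : er.le (f (n+1)) s := hsup.2.1 _ ⟨n+1, rfl⟩
    show (s - x) - f n ∈ er.Epos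
    have e : (s - x) - f n = s - f (n+1) := by rw [← hstep n]; abel
    rw [e]; exact h1
  have hle : er.le s (s - x) := hsup.2.2 _ (G_sub hsup.1 hxG) hub
  have h2 : -x ∈ er.Epos := by
    have h3 : (s - x) - s ∈ er.Epos := hle
    have e : (s - x) - s = -x := by abel
    rwa [e] at h3
  exact epos_cancel hx h2

/-! ### Polynomial calculus in a single positive contraction -/

section poly

variable (v : R)

/-- image of a real polynomial at `v`. -/
noncomputable def pimg (P : ℝ[X]) : R := Polynomial.aeval v P

lemma pimg_comm (P Q : ℝ[X]) : pimg v P * pimg v Q = pimg v Q * pimg v P := by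
  simp only [pimg, ← map_mul, mul_comm]

lemma pimg_commute {z : R} (hz : Commute z v) (P : ℝ[X]) : Commute z (pimg v P) := by
  induction P using Polynomial.induction_on with
  | C a => simpa [pimg] using (show Commute z (algebraMap ℝ R a) from (Algebra.commutes a z).symm)
  | add p q hp hq => simpa [pimg, map_add] using hp.add_right hq
  | monomial n a hn =>
      have e : pimg v (C a * Polynomial.X ^ (n+1)) = (aeval v) (C a) * v ^ (n+1) := by
        simp [pimg, map_mul, map_pow]
      rw [e]
      exact (Commute.mul_right (by simpa using (show Commute z (algebraMap ℝ R a) from (Algebra.commutes a z).symm))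
        (hz.pow_right (n+1)))

lemma pow_G (hscal : ∀ l : ℝ, 0 ≤ l → ∀ a ∈ er.Epos, l • a ∈ er.Epos)
    (hvG : v ∈ er.G) : ∀ n, v ^ n ∈ er.G := by
  intro n
  induction n with
  | zero => simpa using (G_one (er := er))
  | succ k ih =>
      rw [pow_succ]
      exact G_mul_comm hscal ih hvG ((Commute.refl v).pow_left k).eq

lemma pimg_G (hscal : ∀ l : ℝ, 0 ≤ l → ∀ a ∈ er.Epos, l • a ∈ er.Epos)
    (hvG : v ∈ er.G) (P : ℝ[X]) : pimg v P ∈ er.G := by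
  induction P using Polynomial.induction_on with
  | C a =>
      have e : pimg v (C a) = a • (1:R) := by
        simp [pimg, Algebra.algebraMap_eq_smul_one]
      rw [e]; exact G_smul hscal a G_one
  | add p q hp hq => simpa [pimg, map_add] using G_add hp hq
  | monomial n a hn =>
      have e : pimg v (C a * Polynomial.X ^ (n+1)) = a • (v ^ (n+1)) := by
        simp [pimg, map_mul, map_pow, Algebra.smul_def]
      rw [e]
      exact G_smul hscal a (pow_G v hscal hvG (n+1))

section pp
variable (hscal : ∀ l : ℝ, 0 ≤ l → ∀ a ∈ er.Epos, l • a ∈ er.Epos)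
  (hvG : v ∈ er.G) (hv0 : v ∈ er.Epos) (hv1 : 1 - v ∈ er.Epos)

lemma pp_zero : pimg v (0 : ℝ[X]) ∈ er.Epos := by
  have : pimg v (0 : ℝ[X]) = 0 := by simp [pimg]
  rw [this]; exact epos_zero

lemma pp_one : pimg v (1 : ℝ[X]) ∈ er.Epos := by
  have : pimg v (1 : ℝ[X]) = 1 := by simp [pimg]
  rw [this]; exact epos_one

include hscal hvG in
lemma pp_mul {P Q : ℝ[X]} (hP : pimg v P ∈ er.Epos) (hQ : pimg v Q ∈ er.Epos) :
    pimg v (P * Q) ∈ er.Epos := by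
  have : pimg v (P * Q) = pimg v P * pimg v Q := by simp [pimg, map_mul]
  rw [this]; exact epos_mul hP hQ (pimg_comm v P Q)

lemma pp_add {P Q : ℝ[X]} (hP : pimg v P ∈ er.Epos) (hQ : pimg v Q ∈ er.Epos) :
    pimg v (P + Q) ∈ er.Epos := by
  have : pimg v (P + Q) = pimg v P + pimg v Q := by simp [pimg, map_add]
  rw [this]; exact epos_add hP hQ

include hscal hvG in
lemma pp_sq (P : ℝ[X]) : pimg v (P ^ 2) ∈ er.Epos := by
  have : pimg v (P ^ 2) = pimg v P * pimg v P := by simp [pimg, map_pow, pow_two]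
  rw [this]; exact epos_sq (pimg_G v hscal hvG P)

lemma pimg_C_mul (a : ℝ) (P : ℝ[X]) : pimg v (C a * P) = a • pimg v P := by
  simp [pimg, map_mul, Algebra.smul_def]

include hscal in
lemma pp_smul {a : ℝ} (ha : 0 ≤ a) {P : ℝ[X]} (hP : pimg v P ∈ er.Epos) :
    pimg v (C a * P) ∈ er.Epos := by
  rw [pimg_C_mul]; exact epos_smul hscal ha hP

include hv0 in
lemma pp_X : pimg v (Polynomial.X : ℝ[X]) ∈ er.Epos := by simpa [pimg] using hv0

include hv1 in
lemma pp_one_sub_X : pimg v ((1:ℝ[X]) - Polynomial.X) ∈ er.Epos := by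
  have : pimg v ((1:ℝ[X]) - Polynomial.X) = 1 - v := by simp [pimg, map_sub]
  rw [this]; exact hv1

end pp

end poly

/-! ### The square-root iteration polynomials -/

noncomputable def sqS : ℕ → ℝ[X]
  | 0 => 0
  | n+1 => sqS n + C (1/2 : ℝ) * (Polynomial.X - (sqS n) ^ 2)

/-- remainder polynomial -/
noncomputable def sqT (n : ℕ) : ℝ[X] := Polynomial.X - (sqS n) ^ 2

noncomputable def sqY : ℝ[X] := 1 - C (1/2 : ℝ) * Polynomial.X

/-- Equality of real polynomials by evaluation. -/
lemma polyext {p q : ℝ[X]} (h : ∀ r : ℝ, p.eval r = q.eval r) : p = q :=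
  Polynomial.funext h

section sqfacts

variable (v : R)
  (hscal : ∀ l : ℝ, 0 ≤ l → ∀ a ∈ er.Epos, l • a ∈ er.Epos)
  (hvG : v ∈ er.G) (hv0 : v ∈ er.Epos) (hv1 : 1 - v ∈ er.Epos)

include hscal hvG hv0 hv1

lemma sq_main : ∀ n, pimg v (sqT n) ∈ er.Epos ∧ pimg v (1 - sqS n) ∈ er.Epos
    ∧ pimg v (sqS n) ∈ er.Epos := by
  intro n
  induction n with
  | zero =>
      refine ⟨?_, ?_, ?_⟩
      · have e : sqT 0 = Polynomial.X := polyext fun r => by simp [sqT, sqS]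
        rw [e]; exact pp_X v hv0
      · have e : (1 - sqS 0 : ℝ[X]) = 1 := polyext fun r => by simp [sqS]
        rw [e]; exact pp_one v
      · have e : sqS 0 = (0:ℝ[X]) := rfl
        rw [e]; exact pp_zero v
  | succ n ih =>
      obtain ⟨ht, h1s, hs⟩ := ih
      have hbr : pimg v (C (1/2 : ℝ) * ((1 - sqS n)^2 + (1 - Polynomial.X))
          + C (1/4 : ℝ) * sqT n) ∈ er.Epos := by
        refine pp_add v ?_ ?_
        · exact pp_smul v hscal (by norm_num)
            (pp_add v (pp_sq v hscal hvG _) (pp_one_sub_X v hv1))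
        · exact pp_smul v hscal (by norm_num) ht
      refine ⟨?_, ?_, ?_⟩
      · have e : sqT (n+1) = sqT n * (C (1/2 : ℝ) * ((1 - sqS n)^2 + (1 - Polynomial.X))
            + C (1/4 : ℝ) * sqT n) :=
          polyext fun r => by simp [sqT, sqS]; try ring
        rw [e]; exact pp_mul v hscal hvG ht hbr
      · have e : (1 - sqS (n+1) : ℝ[X])
            = C (1/2 : ℝ) * ((1 - sqS n)^2 + (1 - Polynomial.X)) :=
          polyext fun r => by simp [sqS]; try ring
        rw [e]
        exact pp_smul v hscal (by norm_num)
          (pp_add v (pp_sq v hscal hvG _) (pp_one_sub_X v hv1))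
      · have e : sqS (n+1) = sqS n + C (1/2 : ℝ) * sqT n :=
          polyext fun r => by simp [sqS, sqT]
        rw [e]; exact pp_add v hs (pp_smul v hscal (by norm_num) ht)

lemma sq_asc (n : ℕ) : pimg v (sqS (n+1) - sqS n) ∈ er.Epos := by
  have e : sqS (n+1) - sqS n = C (1/2 : ℝ) * sqT n :=
    polyext fun r => by simp [sqS, sqT]
  rw [e]; exact pp_smul v hscal (by norm_num) (sq_main v hscal hvG hv0 hv1 n).1

lemma sq_half (n : ℕ) : pimg v (sqS (n+1) - C (1/2 : ℝ) * Polynomial.X) ∈ er.Epos := by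
  induction n with
  | zero =>
      have e : sqS 1 - C (1/2 : ℝ) * Polynomial.X = 0 :=
        polyext fun r => by simp [sqS]
      rw [e]; exact pp_zero v
  | succ n ih =>
      have e : sqS (n+2) - C (1/2 : ℝ) * Polynomial.X
          = (sqS (n+1) - C (1/2 : ℝ) * Polynomial.X) + (sqS (n+2) - sqS (n+1)) := by ring
      rw [e]; exact pp_add v ih (sq_asc v hscal hvG hv0 hv1 (n+1))

lemma sq_Y : pimg v sqY ∈ er.Epos := by
  have e : sqY = C (1/2 : ℝ) * ((1 - Polynomial.X) + 1) :=
    polyext fun r => by simp [sqY]; try ring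
  rw [e]
  exact pp_smul v hscal (by norm_num) (pp_add v (pp_one_sub_X v hv1) (pp_one v))

lemma sq_decay (n : ℕ) : pimg v (sqT (n+1) * sqY - sqT (n+2)) ∈ er.Epos := by
  have e : sqT (n+1) * sqY - sqT (n+2)
      = sqT (n+1) * ((sqS (n+1) - C (1/2:ℝ) * Polynomial.X) + C (1/4:ℝ) * sqT (n+1)) :=
    polyext fun r => by simp [sqT, sqS, sqY]; try ring
  rw [e]
  refine pp_mul v hscal hvG (sq_main v hscal hvG hv0 hv1 (n+1)).1 (pp_add v ?_ ?_)
  · exact sq_half v hscal hvG hv0 hv1 n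
  · exact pp_smul v hscal (by norm_num) (sq_main v hscal hvG hv0 hv1 (n+1)).1

lemma sq_tbound (n : ℕ) :
    pimg v (Polynomial.X * sqY ^ n - sqT (n+1)) ∈ er.Epos := by
  induction n with
  | zero =>
      have e : Polynomial.X * sqY ^ 0 - sqT 1 = (C (1/2:ℝ) * Polynomial.X)^2 :=
        polyext fun r => by simp [sqT, sqS]; try ring
      rw [e]; exact pp_sq v hscal hvG _
  | succ n ih =>
      have e : Polynomial.X * sqY ^ (n+1) - sqT (n+2)
          = sqY * (Polynomial.X * sqY ^ n - sqT (n+1)) + (sqT (n+1) * sqY - sqT (n+2)) := by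
        ring
      rw [e]
      exact pp_add v (pp_mul v hscal hvG (sq_Y v hscal hvG hv0 hv1) ih)
        (sq_decay v hscal hvG hv0 hv1 n)

lemma sq_Ypow (j : ℕ) : pimg v (sqY ^ j) ∈ er.Epos := by
  induction j with
  | zero => simpa using pp_one (er := er) v
  | succ j ih => rw [pow_succ]; exact pp_mul v hscal hvG ih (sq_Y v hscal hvG hv0 hv1)

lemma sq_Ypow_compl (j : ℕ) : pimg v (1 - sqY ^ j) ∈ er.Epos := by
  induction j with
  | zero => simpa using pp_zero (er := er) v
  | succ j ih =>
      have e : (1 - sqY ^ (j+1) : ℝ[X]) = sqY * (1 - sqY ^ j) + C (1/2:ℝ) * Polynomial.X :=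
        polyext fun r => by simp [sqY]; try ring
      rw [e]
      exact pp_add v (pp_mul v hscal hvG (sq_Y v hscal hvG hv0 hv1) ih)
        (pp_smul v hscal (by norm_num) (pp_X v hv0))

lemma sq_sumbound (n : ℕ) :
    pimg v (2 - C ((n:ℝ)+1) * (Polynomial.X * sqY ^ n)) ∈ er.Epos := by
  have main : ∀ m : ℕ, pimg v (2 - 2 * sqY ^ (m+1)
      - C ((m:ℝ)+1) * (Polynomial.X * sqY ^ m)) ∈ er.Epos := by
    intro m
    induction m with
    | zero =>
        have e : (2 - 2 * sqY ^ (0+1) - C (((0:ℕ):ℝ)+1) * (Polynomial.X * sqY ^ 0) : ℝ[X])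
            = 0 := polyext fun r => by simp [sqY]; try ring
        rw [e]; exact pp_zero v
    | succ m ih =>
        have e : (2 - 2 * sqY ^ (m+2) - C (((m+1:ℕ):ℝ)+1) * (Polynomial.X * sqY ^ (m+1)) : ℝ[X])
            = sqY * (2 - 2 * sqY ^ (m+1) - C ((m:ℝ)+1) * (Polynomial.X * sqY ^ m))
              + Polynomial.X * (1 - sqY ^ (m+1)) :=
          polyext fun r => by simp [sqY]; push_cast; try ring
        rw [e]
        refine pp_add v (pp_mul v hscal hvG (sq_Y v hscal hvG hv0 hv1) ih)
          (pp_mul v hscal hvG (pp_X v hv0) (sq_Ypow_compl v hscal hvG hv0 hv1 (m+1)))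
  have e : (2 - C ((n:ℝ)+1) * (Polynomial.X * sqY ^ n) : ℝ[X])
      = (2 - 2 * sqY ^ (n+1) - C ((n:ℝ)+1) * (Polynomial.X * sqY ^ n))
        + (sqY ^ (n+1) + sqY ^ (n+1)) := by ring
  rw [e]
  exact pp_add v (main n)
    (pp_add v (sq_Ypow v hscal hvG hv0 hv1 (n+1)) (sq_Ypow v hscal hvG hv0 hv1 (n+1)))

end sqfacts

end ERingProof
namespace ERingProof

open ERing Polynomial

variable {R : Type*} [Ring R] [Algebra ℝ R] {er : ERing R}

lemma commute_two_left (x : R) : Commute (2:R) x := (two_mul x).trans (mul_two x).symm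

/-- Existence of a positive square root of h² double-commuting appropriately. -/
lemma exists_sqrt (hAH : er.IsAH) (hscal : ∀ l : ℝ, 0 ≤ l → ∀ a ∈ er.Epos, l • a ∈ er.Epos)
    {h : R} (hh : h ∈ er.G) :
    ∃ k, k ∈ er.G ∧ k ∈ er.Epos ∧ k * k = h * h ∧
      (∀ z, z ∈ er.G → z * (h*h) = (h*h) * z → z * k = k * z) := by
  obtain ⟨-, hQA, hCV⟩ := hAH
  have hh2 : h * h ∈ er.Epos := epos_sq hh
  obtain ⟨K, hK, hKb⟩ := epos_bound hh2
  set c : ℝ := K + 1 with hc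
  have hcpos : (0:ℝ) < c := by rw [hc]; linarith
  set v : R := c⁻¹ • (h * h) with hv
  have hv0 : v ∈ er.Epos := epos_smul hscal (by positivity) hh2
  have hvG : v ∈ er.G := epos_sub_G hv0
  have hv1 : (1:R) - v ∈ er.Epos := by
    have h1 : (K • (1:R) - h*h) + 1 ∈ er.Epos := epos_add hKb epos_one
    have h2 : c⁻¹ • ((K • (1:R) - h*h) + 1) ∈ er.Epos := epos_smul hscal (by positivity) h1
    have e : c⁻¹ • ((K • (1:R) - h*h) + 1) = 1 - v := by
      have e1 : (K • (1:R) - h*h) + 1 = c • (1:R) - h*h := by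
        rw [hc, add_smul, one_smul]; abel
      rw [e1, smul_sub, smul_smul, inv_mul_cancel₀ (ne_of_gt hcpos), one_smul, hv]
    rwa [e] at h2
  set s : ℕ → R := fun n => pimg v (sqS n) with hs
  have hsG : ∀ n, s n ∈ er.G := fun n => pimg_G v hscal hvG _
  have hs_sub : ∀ P Q : ℝ[X], pimg v (P - Q) = pimg v P - pimg v Q := fun P Q => by
    simp [pimg, map_sub]
  have hspos : ∀ n, s n ∈ er.Epos := fun n => (sq_main v hscal hvG hv0 hv1 n).2.2
  have hsle1 : ∀ n, (1:R) - s n ∈ er.Epos := by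
    intro n
    have h1 := (sq_main v hscal hvG hv0 hv1 n).2.1
    rw [hs_sub] at h1
    rwa [show pimg v (1:ℝ[X]) = 1 from by simp [pimg]] at h1
  have htpos : ∀ n, v - s n * s n ∈ er.Epos := by
    intro n
    have := (sq_main v hscal hvG hv0 hv1 n).1
    have e : pimg v (sqT n) = v - s n * s n := by
      simp [pimg, sqT, map_sub, map_pow, pow_two, hs]
    rwa [e] at this
  obtain ⟨k₀, hsup, hcc⟩ := hCV s hsG
    (fun n => by
      show s (n+1) - s n ∈ er.Epos
      have := sq_asc v hscal hvG hv0 hv1 n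
      rwa [hs_sub] at this)
    (fun m n => pimg_comm v _ _)
    ⟨1, G_one, fun n => by show (1:R) - s n ∈ er.Epos; exact hsle1 n⟩
  have hk0G : k₀ ∈ er.G := hsup.1
  have hks : ∀ n, k₀ * s n = s n * k₀ := fun n =>
    hcc.2 (s n) ⟨hsG n, by rintro a ⟨m, rfl⟩; exact pimg_comm v _ _⟩
  have hkz : ∀ z, z ∈ er.G → z * v = v * z → k₀ * z = z * k₀ := fun z hz hzv =>
    hcc.2 z ⟨hz, by rintro a ⟨m, rfl⟩; exact (pimg_commute v hzv _).eq⟩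
  have hk0_ge : ∀ n, k₀ - s n ∈ er.Epos := fun n => hsup.2.1 (s n) ⟨n, rfl⟩
  have hs0 : s 0 = 0 := by simp [hs, pimg, show sqS 0 = (0:ℝ[X]) from rfl]
  have hk0pos : k₀ ∈ er.Epos := by have := hk0_ge 0; rwa [hs0, sub_zero] at this
  have hk0le1 : (1:R) - k₀ ∈ er.Epos :=
    hsup.2.2 1 G_one (by rintro a ⟨n, rfl⟩; show (1:R) - s n ∈ er.Epos; exact hsle1 n)
  have hk0v : k₀ * v = v * k₀ := hkz v hvG rfl
  -- Step A : v - k₀*k₀ ∈ er.Epos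
  have stepA : v - k₀ * k₀ ∈ er.Epos := by
    have hw : ∀ n, (k₀ - s n) - (1/2:ℝ) • (k₀ * k₀ - v) ∈ er.Epos := by
      intro n
      have ck : Commute k₀ (s n) := hks n
      have C1 : Commute k₀ (k₀ - s n) := (Commute.refl k₀).sub_right ck
      have C2 : Commute (s n) (k₀ - s n) := ck.symm.sub_right (Commute.refl _)
      have C3 : Commute (2:R) (k₀ - s n) := commute_two_left _
      have cA : Commute (2 - k₀ - s n) (k₀ - s n) := (C3.sub_left C1).sub_left C2
      have h1 : (2:R) - k₀ - s n ∈ er.Epos := by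
        have e : (2:R) - k₀ - s n = (1 - k₀) + (1 - s n) := by
          rw [show (2:R) = 1 + 1 by norm_num]; abel
        rw [e]; exact epos_add hk0le1 (hsle1 n)
      have hA : (2 - k₀ - s n) * (k₀ - s n) + (v - s n * s n) ∈ er.Epos :=
        epos_add (epos_mul h1 (hk0_ge n) cA.eq) (htpos n)
      have eA : (2 - k₀ - s n) * (k₀ - s n) + (v - s n * s n)
          = (2:ℝ) • (k₀ - s n) - (k₀ * k₀ - v) := by
        have h2 : (2:ℝ) • (k₀ - s n) = (k₀ - s n) + (k₀ - s n) := by module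
        rw [h2]
        simp only [mul_sub, sub_mul, two_mul]
        rw [hks n]
        abel
      rw [eA] at hA
      have e3 : (k₀ - s n) - (1/2:ℝ) • (k₀ * k₀ - v)
          = (1/2:ℝ) • ((2:ℝ) • (k₀ - s n) - (k₀ * k₀ - v)) := by module
      rw [e3]; exact epos_smul hscal (by norm_num) hA
    have wG : (1/2:ℝ) • (k₀ * k₀ - v) ∈ er.G :=
      G_smul hscal _ (G_sub (G_mul_comm hscal hk0G hk0G rfl) hvG)
    have hub : ∀ a ∈ Set.range s, er.le a (k₀ - (1/2:ℝ) • (k₀ * k₀ - v)) := by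
      rintro a ⟨n, rfl⟩
      show (k₀ - (1/2:ℝ) • (k₀ * k₀ - v)) - s n ∈ er.Epos
      have e : (k₀ - (1/2:ℝ) • (k₀ * k₀ - v)) - s n
          = (k₀ - s n) - (1/2:ℝ) • (k₀ * k₀ - v) := by abel
      rw [e]; exact hw n
    have hle := hsup.2.2 _ (G_sub hk0G wG) hub
    have h4 : (k₀ - (1/2:ℝ) • (k₀ * k₀ - v)) - k₀ ∈ er.Epos := hle
    have e4 : (k₀ - (1/2:ℝ) • (k₀ * k₀ - v)) - k₀ = (1/2:ℝ) • (v - k₀ * k₀) := by module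
    rw [e4] at h4
    exact epos_unsmul hscal (by norm_num) h4
  -- Step B : v - k₀ * k₀ = 0
  have stepB : v - k₀ * k₀ = 0 := by
    refine arch hCV hscal stepA (c := 2) ?_
    intro n
    obtain ⟨wn, hwn⟩ : ∃ w : R, w = pimg v (Polynomial.X * sqY ^ n) := ⟨_, rfl⟩
    have P1 : wn - (v - s (n+1) * s (n+1)) ∈ er.Epos := by
      have := sq_tbound v hscal hvG hv0 hv1 n
      have e : pimg v (Polynomial.X * sqY ^ n - sqT (n+1))
          = wn - (v - s (n+1) * s (n+1)) := by
        rw [hs_sub, ← hwn]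
        congr 1
        simp [pimg, sqT, map_sub, map_pow, pow_two, hs]
      rwa [e] at this
    have P2 : k₀ * k₀ - s (n+1) * s (n+1) ∈ er.Epos := by
      have ck : Commute k₀ (s (n+1)) := hks (n+1)
      have comm2 : (k₀ - s (n+1)) * (k₀ + s (n+1)) = (k₀ + s (n+1)) * (k₀ - s (n+1)) :=
        (((Commute.refl k₀).sub_left ck.symm).add_right
          ((ck.sub_left (Commute.refl _)))).eq
      have hmul := epos_mul (hk0_ge (n+1)) (epos_add hk0pos (hspos (n+1))) comm2
      have e : (k₀ - s (n+1)) * (k₀ + s (n+1)) = k₀ * k₀ - s (n+1) * s (n+1) := by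
        simp only [mul_add, sub_mul]
        rw [hks (n+1)]
        abel
      rwa [e] at hmul
    have P12 : wn - (v - k₀ * k₀) ∈ er.Epos := by
      have hadd := epos_add P1 P2
      have e : (wn - (v - s (n+1) * s (n+1))) + (k₀ * k₀ - s (n+1) * s (n+1))
          = wn - (v - k₀ * k₀) := by abel
      rwa [e] at hadd
    have P3 : (2:R) - ((n:ℝ)+1) • wn ∈ er.Epos := by
      have hsb := sq_sumbound v hscal hvG hv0 hv1 n
      have e : pimg v (2 - C ((n:ℝ)+1) * (Polynomial.X * sqY ^ n))
          = (2:R) - ((n:ℝ)+1) • wn := by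
        rw [hs_sub, pimg_C_mul, ← hwn]
        congr 1
        simp [pimg, map_ofNat]
      rwa [e] at hsb
    have e2 : (2:ℝ) • (1:R) = (2:R) := by rw [two_smul]; norm_num
    have efin : (2:ℝ) • (1:R) - ((n:ℝ)+1) • (v - k₀ * k₀)
        = ((2:R) - ((n:ℝ)+1) • wn) + ((n:ℝ)+1) • (wn - (v - k₀ * k₀)) := by
      rw [e2]; module
    rw [efin]
    exact epos_add P3 (epos_smul hscal (by positivity) P12)
  have hk0k0 : k₀ * k₀ = v := (sub_eq_zero.mp stepB).symm
  refine ⟨Real.sqrt c • k₀, G_smul hscal _ hk0G,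
    epos_smul hscal (Real.sqrt_nonneg c) hk0pos, ?_, ?_⟩
  · rw [smul_mul_assoc, mul_smul_comm, smul_smul, Real.mul_self_sqrt hcpos.le, hk0k0, hv,
      smul_smul, mul_inv_cancel₀ (ne_of_gt hcpos), one_smul]
  · intro z hz hzh2
    have hzv : z * v = v * z := by rw [hv, mul_smul_comm, smul_mul_assoc, hzh2]
    have hzk0 := hkz z hz hzv
    rw [mul_smul_comm, smul_mul_assoc, hzk0]

/-- Uniqueness: any positive element of G squaring to h² equals the canonical root,
hence commutes with everything commuting with h. -/
lemma abs_comm (hAH : er.IsAH) (hscal : ∀ l : ℝ, 0 ≤ l → ∀ a ∈ er.Epos, l • a ∈ er.Epos)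
    {h m : R} (hh : h ∈ er.G) (hm : m ∈ er.G) (hm0 : m ∈ er.Epos)
    (hmm : m * m = h * h) :
    m * h = h * m ∧ (∀ z, z ∈ er.G → z * h = h * z → z * m = m * z) := by
  have hQA := hAH.2.1
  obtain ⟨k, hkG, hk0, hkk, hkcomm⟩ := exists_sqrt hAH hscal hh
  have hmh2 : m * (h*h) = (h*h) * m := by
    rw [← hmm, ← mul_assoc, mul_assoc]
  have hmk : m * k = k * m := hkcomm m hm hmh2
  set d : R := m - k with hd
  have hdG : d ∈ er.G := G_sub hm hkG
  have hdm : d * m = m * d := by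
    rw [hd, sub_mul, mul_sub, hmk]
  have hdk : d * k = k * d := by
    rw [hd, sub_mul, mul_sub, hmk]
  have hd1 : d * (m + k) = 0 := by
    rw [hd, sub_mul, mul_add, mul_add, hmk, hmm, hkk]
    abel
  have hd2sum : (d * d) * m + (d * d) * k = 0 := by
    rw [← mul_add, mul_assoc, hd1, mul_zero]
  have hd2 : d * d ∈ er.Epos := epos_sq hdG
  have hd2m : (d * d) * m ∈ er.Epos := by
    refine epos_mul hd2 hm0 ?_
    rw [mul_assoc, hdm, ← mul_assoc, hdm, mul_assoc]
  have hd2k : (d * d) * k ∈ er.Epos := by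
    refine epos_mul hd2 hk0 ?_
    rw [mul_assoc, hdk, ← mul_assoc, hdk, mul_assoc]
  obtain ⟨hz1, hz2⟩ := epos_sum_zero hd2m hd2k hd2sum
  have hd3 : (d * d) * d = 0 := by
    have : (d * d) * (m - k) = 0 := by rw [mul_sub, hz1, hz2, sub_zero]
    rwa [← hd] at this
  have hd4 : (d * d) * (d * d) = 0 := by
    calc (d*d) * (d*d) = ((d*d)*d)*d := by rw [← mul_assoc]
    _ = 0 := by rw [hd3, zero_mul]
  have hd2z : d * d = 0 := sq_zero hQA (G_mul_comm hscal hdG hdG rfl) hd4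
  have hdz : d = 0 := sq_zero hQA hdG hd2z
  have hmkeq : m = k := by rw [← sub_eq_zero, ← hd]; exact hdz
  constructor
  · have hhh2 : h * (h*h) = (h*h) * h := by rw [← mul_assoc]
    have := hkcomm h hh hhh2
    rw [hmkeq]; rw [this]
  · intro z hz hzh
    have hzh2 : z * (h*h) = (h*h) * z := by
      rw [← mul_assoc, hzh, mul_assoc, hzh, mul_assoc]
    rw [hmkeq]
    exact hkcomm z hz hzh2

end ERingProof
namespace ERingProof

open ERing Polynomial

variable {R : Type*} [Ring R] [Algebra ℝ R] {er : ERing R}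

lemma scal_central (z : R) (l : ℝ) : z * (l • (1:R)) = (l • (1:R)) * z := by
  rw [mul_smul_comm, smul_mul_assoc, mul_one, one_mul]

/-- All facts about the positive/negative part and carrier at one level. -/
structure SpecData (er : ERing R) (h pl a b q : R) : Prop where
  haG : a ∈ er.G
  hbG : b ∈ er.G
  hqG : q ∈ er.G
  hq0 : q ∈ er.Epos
  hr0 : 1 - q ∈ er.Epos
  hidem : q * q = q
  ha0 : a ∈ er.Epos
  hb0 : b ∈ er.Epos
  hab : a - b = h
  hab0 : a * b = 0
  hba0 : b * a = 0
  haq : a * q = a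
  hqa : q * a = a
  har : a * (1 - q) = 0
  hra : (1 - q) * a = 0
  hqb : q * b = 0
  hbq : b * q = 0
  hcomm : ∀ z, z ∈ er.G → z * h = h * z → z * a = a * z ∧ z * b = b * z ∧ z * q = q * z
  hcar : ∀ w, w ∈ er.G → (a * w = 0 ↔ q * w = 0)
  hpl : pl = 1 - q

namespace SpecData

variable {h pl a b q : R} (d : SpecData er h pl a b q)
include d

lemma hhG : h ∈ er.G := by
  have := G_sub d.haG d.hbG; rwa [d.hab] at this

lemma hhq : h * q = a := by
  rw [← d.hab, sub_mul, d.hbq, d.haq, sub_zero]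

lemma hqh : q * h = a := by
  rw [← d.hab, mul_sub, d.hqb, d.hqa, sub_zero]

lemma hrG : (1:R) - q ∈ er.G := G_sub G_one d.hqG

lemma hah : a * h = h * a := by
  rw [← d.hab, mul_sub, sub_mul, d.hab0, d.hba0]

lemma hbh : b * h = h * b := by
  rw [← d.hab, mul_sub, sub_mul, d.hab0, d.hba0]

lemma hqcomm : q * h = h * q := by rw [d.hqh, d.hhq]

end SpecData

lemma mkSpecData (hAH : er.IsAH) (hscal : ∀ l : ℝ, 0 ≤ l → ∀ a ∈ er.Epos, l • a ∈ er.Epos)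
    {g : R} (hg : g ∈ er.G) {l : ℝ} {pl : R} (hsp : er.IsSpecProj g l pl) :
    ∃ a b q, SpecData er (g - l • (1:R)) pl a b q := by
  have hQA := hAH.2.1
  obtain ⟨a, ⟨haG, m, ⟨hmG, hm0', hm2'⟩, hsum⟩, q, ⟨⟨hqG, hqidem'⟩, hcar⟩, hpl⟩ := hsp
  set h : R := g - l • (1:R) with hh
  have hhG : h ∈ er.G := G_sub hg (G_smul hscal l G_one)
  have hm0 : m ∈ er.Epos := by
    have h1 : m - 0 ∈ er.Epos := hm0'
    rwa [sub_zero] at h1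
  have hm2 : m * m = h * h := by
    have := hm2'; rwa [pow_two, pow_two] at this
  obtain ⟨hmh, hmz⟩ := abs_comm hAH hscal hhG hmG hm0 hm2
  have ha_eq : a = (1/2:ℝ) • (m + h) := by
    have e : (1/2:ℝ) • (a + a) = a := by module
    rw [← e, hsum]
  set b : R := a - h with hb
  have hbG : b ∈ er.G := G_sub haG hhG
  have hbeq2 : a - b = h := by rw [hb]; abel
  have hb_eq : b = (1/2:ℝ) • (m - h) := by rw [hb, ha_eq]; module
  have hidem : q * q = q := by rw [← pow_two]; exact hqidem'.symm
  have hq0 : q ∈ er.Epos := by have := epos_sq hqG; rwa [hidem] at this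
  have hrr : (1 - q) * (1 - q) = 1 - q := by
    simp only [mul_sub, sub_mul, mul_one, one_mul, hidem]; abel
  have hrG : (1:R) - q ∈ er.G := G_sub G_one hqG
  have hr0 : (1:R) - q ∈ er.Epos := by have := epos_sq hrG; rwa [hrr] at this
  have hab0 : a * b = 0 := by
    rw [ha_eq, hb_eq, smul_mul_assoc, mul_smul_comm, smul_smul]
    have e : (m + h) * (m - h) = 0 := by
      rw [mul_sub, add_mul, add_mul, hm2, hmh]; abel
    rw [e, smul_zero]
  have hba0 : b * a = 0 := mul_zero_symm hQA haG hbG hab0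
  have har : a * (1 - q) = 0 := by
    refine (hcar (1 - q) hrG).mpr ?_
    rw [mul_sub, mul_one, hidem, sub_self]
  have haq : a * q = a := by
    have h1 := har; rw [mul_sub, mul_one, sub_eq_zero] at h1; exact h1.symm
  have hra : (1 - q) * a = 0 := mul_zero_symm hQA haG hrG har
  have hqa : q * a = a := by
    have h1 := hra; rw [sub_mul, one_mul, sub_eq_zero] at h1; exact h1.symm
  have hqb : q * b = 0 := (hcar b hbG).mp hab0
  have hbq : b * q = 0 := mul_zero_symm hQA hqG hbG hqb
  have hhq : h * q = a := by rw [← hbeq2, sub_mul, hbq, haq, sub_zero]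
  have hqh : q * h = a := by rw [← hbeq2, mul_sub, hqb, hqa, sub_zero]
  have ha0 : a ∈ er.Epos := by
    have e1 : q * (m + h) * q = q * m * q + a := by
      rw [mul_add, add_mul, hqh, haq]
    have e2 : q * (m + h) * q = a + a := by
      rw [← hsum, mul_add, add_mul, hqa, haq]
    have key : q * m * q = a := add_right_cancel (e1.symm.trans e2)
    rw [← key]; exact epos_conj hq0 hm0
  have hb0 : b ∈ er.Epos := by
    have hbr : b * (1 - q) = b := by rw [mul_sub, mul_one, hbq, sub_zero]
    have hrb : (1 - q) * b = b := by rw [sub_mul, one_mul, hqb, sub_zero]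
    have hhr : h * (1 - q) = -b := by
      rw [← hbeq2, sub_mul, har, hbr, zero_sub]
    have e1 : (1 - q) * (m + h) * (1 - q) = (1 - q) * m * (1 - q) - b := by
      rw [mul_add, add_mul, mul_assoc (1-q) h (1-q), hhr, mul_neg, hrb]
      abel
    have e2 : (1 - q) * (m + h) * (1 - q) = 0 := by
      rw [← hsum]
      simp only [mul_add, add_mul, hra, zero_mul, add_zero]
    have key : (1 - q) * m * (1 - q) = b := by
      have h1 := e1.symm.trans e2
      rwa [sub_eq_zero] at h1
    rw [← key]; exact epos_conj hr0 hm0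
  refine ⟨a, b, q, ?_⟩
  have hqr0 : q * (1 - q) = 0 := by rw [mul_sub, mul_one, hidem, sub_self]
  have hrq0 : (1 - q) * q = 0 := by rw [sub_mul, one_mul, hidem, sub_self]
  refine ⟨haG, hbG, hqG, hq0, hr0, hidem, ha0, hb0, hbeq2, hab0, hba0, haq, hqa, har, hra,
    hqb, hbq, ?_, hcar, hpl⟩
  intro z hz hzh
  have hzm : z * m = m * z := hmz z hz hzh
  have hza : z * a = a * z := by
    rw [ha_eq, mul_smul_comm, smul_mul_assoc, mul_add, add_mul, hzm, hzh]
  have hzb : z * b = b * z := by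
    rw [hb, mul_sub, sub_mul, hza, hzh]
  refine ⟨hza, hzb, ?_⟩
  have hj : z * (1-q) + (1-q) * z ∈ er.G := G_jordan hz hrG
  have ah1 : a * (z * (1-q) + (1-q) * z) = 0 := by
    rw [mul_add, ← mul_assoc, ← hza, mul_assoc, har, mul_zero, ← mul_assoc, har, zero_mul,
      add_zero]
  have qh1 : q * (z * (1-q) + (1-q) * z) = 0 := (hcar _ hj).mp ah1
  have h1q : (z * (1-q) + (1-q) * z) * q = 0 := mul_zero_symm hQA hqG hj qh1
  have eq1 : q * z = q * z * q := by
    have h2 : q * (z * (1-q)) + q * ((1-q) * z) = 0 := by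
      rw [← mul_add]; exact qh1
    rw [← mul_assoc, ← mul_assoc, hqr0, zero_mul, add_zero] at h2
    have h3 : q * z * 1 - q * z * q = 0 := by
      rw [← mul_sub]; exact h2
    rw [mul_one, sub_eq_zero] at h3
    exact h3
  have eq2 : z * q = q * z * q := by
    have h2 : (z * (1-q)) * q + ((1-q) * z) * q = 0 := by
      rw [← add_mul]; exact h1q
    rw [mul_assoc, hrq0, mul_zero, zero_add, sub_mul, one_mul, sub_mul] at h2
    rw [sub_eq_zero] at h2
    exact h2
  rw [eq2, ← eq1]

/-- Monotonicity of the carriers. -/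
lemma spec_mono (hAH : er.IsAH) (hscal : ∀ l : ℝ, 0 ≤ l → ∀ a ∈ er.Epos, l • a ∈ er.Epos)
    {g : R} (hg : g ∈ er.G) {l₁ l₂ : ℝ} (hl : l₁ ≤ l₂)
    {p₁ a₁ b₁ q₁ p₂ a₂ b₂ q₂ : R}
    (d₁ : SpecData er (g - l₁ • (1:R)) p₁ a₁ b₁ q₁)
    (d₂ : SpecData er (g - l₂ • (1:R)) p₂ a₂ b₂ q₂) :
    q₂ * q₁ = q₂ ∧ q₁ * q₂ = q₂ := by
  have hQA := hAH.2.1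
  set h₁ : R := g - l₁ • (1:R) with hh1
  set h₂ : R := g - l₂ • (1:R) with hh2
  set t : ℝ := l₂ - l₁ with ht
  have ht0 : 0 ≤ t := by rw [ht]; linarith
  have hh21 : h₂ = h₁ - t • (1:R) := by rw [hh1, hh2, ht, sub_smul]; abel
  have hcent : ∀ z : R, z * h₁ = h₁ * z → z * h₂ = h₂ * z := by
    intro z hz
    rw [hh21, mul_sub, sub_mul, hz, scal_central]
  have hcent' : ∀ z : R, z * h₂ = h₂ * z → z * h₁ = h₁ * z := by
    intro z hz
    have e : h₁ = h₂ + t • (1:R) := by rw [hh21]; abel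
    rw [e, mul_add, add_mul, hz, scal_central]
  -- a₂ commutes with everything at level 1
  have ha2h1 : a₂ * h₁ = h₁ * a₂ := by
    have := (d₂.hcomm h₂ d₂.hhG rfl).1
    exact hcent' a₂ this.symm
  obtain ⟨-, -, ha2q1⟩ := d₁.hcomm a₂ d₂.haG ha2h1
  have hb1h2 : b₁ * h₂ = h₂ * b₁ := hcent b₁ d₁.hbh
  obtain ⟨hb1a2, -, -⟩ := d₂.hcomm b₁ d₁.hbG hb1h2
  set r : R := 1 - q₁ with hr
  have hrG : r ∈ er.G := d₁.hrG
  have hrr : r * r = r := by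
    rw [hr]
    simp only [mul_sub, sub_mul, mul_one, one_mul, d₁.hidem]; abel
  have hr0 : r ∈ er.Epos := d₁.hr0
  have ha2r : a₂ * r = r * a₂ := by
    rw [hr, mul_sub, sub_mul, mul_one, one_mul, ha2q1]
  set A : R := a₂ * r with hA
  have hAG : A ∈ er.G := G_mul_comm hscal d₂.haG hrG ha2r
  have hA0 : A ∈ er.Epos := epos_mul d₂.ha0 hr0 ha2r
  -- A * A = -(a₂ * b₁) - t • A
  have hb1r : b₁ * r = b₁ := by rw [hr, mul_sub, mul_one, d₁.hbq, sub_zero]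
  have hh1r : h₁ * r = -b₁ := by
    rw [← d₁.hab, sub_mul, d₁.har, hb1r, zero_sub]
  have ha2a2 : a₂ * a₂ = a₂ * h₂ := by
    rw [← d₂.hab, mul_sub, d₂.hab0, sub_zero]
  have hAA : A * A = -(a₂ * b₁) - t • A := by
    have e1 : A * A = (a₂ * a₂) * (r * r) := by
      rw [hA]
      calc a₂ * r * (a₂ * r) = a₂ * (r * (a₂ * r)) := by rw [mul_assoc]
      _ = a₂ * ((r * a₂) * r) := by rw [← mul_assoc r a₂ r]
      _ = a₂ * ((a₂ * r) * r) := by rw [← ha2r]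
      _ = a₂ * (a₂ * (r * r)) := by rw [mul_assoc a₂ r r]
      _ = (a₂ * a₂) * (r * r) := by rw [← mul_assoc]
    calc A * A = (a₂ * a₂) * (r * r) := e1
    _ = (a₂ * h₂) * r := by rw [hrr, ha2a2]
    _ = a₂ * (h₂ * r) := by rw [mul_assoc]
    _ = a₂ * (h₁ * r - (t • (1:R)) * r) := by rw [hh21, sub_mul]
    _ = a₂ * (-b₁ - t • r) := by rw [hh1r, smul_mul_assoc, one_mul]
    _ = -(a₂ * b₁) - t • A := by rw [mul_sub, mul_neg, mul_smul_comm, ← hA]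
  have hsum : A * A + (a₂ * b₁ + t • A) = 0 := by rw [hAA]; abel
  have hA2 : A = 0 := by
    have h1 : A * A = 0 :=
      (epos_sum_zero (epos_sq hAG)
        (epos_add (epos_mul d₂.ha0 d₁.hb0 hb1a2.symm) (epos_smul hscal ht0 hA0)) hsum).1
    exact sq_zero hQA hAG h1
  have hq2r : q₂ * r = 0 := (d₂.hcar r hrG).mp (by rw [← hA, hA2])
  have hrq2 : r * q₂ = 0 := mul_zero_symm hQA d₂.hqG hrG hq2r
  constructor
  · have := hq2r
    rw [hr, mul_sub, mul_one, sub_eq_zero] at this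
    exact this.symm
  · have := hrq2
    rw [hr, sub_mul, one_mul, sub_eq_zero] at this
    exact this.symm

/-- Below the lower spectral bound the spectral projection is the identity's complement 0. -/
lemma spec_bot (hscal : ∀ l : ℝ, 0 ≤ l → ∀ a ∈ er.Epos, l • a ∈ er.Epos)
    {h pl a b q : R} (d : SpecData er h pl a b q)
    {δ : ℝ} (hδ : 0 < δ) (hlow : h - δ • (1:R) ∈ er.Epos) : pl = 0 := by
  have ha' : a - (δ/2) • (1:R) ∈ er.Epos := by
    have hsum := epos_add (epos_add d.ha0 d.hb0) hlow
    have e : (a + b) + (h - δ • (1:R)) = (2:ℝ) • (a - (δ/2) • (1:R)) := by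
      rw [← d.hab]; module
    rw [e] at hsum
    exact epos_unsmul hscal (by norm_num) hsum
  have hconj : (1-q) * (a - (δ/2) • (1:R)) * (1-q) ∈ er.Epos := epos_conj d.hr0 ha'
  have hrr : ((1:R)-q) * (1-q) = 1-q := by
    simp only [mul_sub, sub_mul, mul_one, one_mul, d.hidem]; abel
  have einner : (1-q) * (a - (δ/2) • (1:R)) = -((δ/2) • ((1:R)-q)) := by
    rw [mul_sub, d.hra, zero_sub, mul_smul_comm, mul_one]
  have e2 : (1-q) * (a - (δ/2) • (1:R)) * (1-q) = -((δ/2) • ((1:R)-q)) := by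
    rw [einner, neg_mul, smul_mul_assoc, hrr]
  rw [e2] at hconj
  have hzero : (δ/2) • ((1:R)-q) = 0 :=
    epos_cancel (epos_smul hscal (by positivity) d.hr0) hconj
  have hrzero : (1:R) - q = 0 := by
    have e3 : (1:R) - q = (2/δ) • ((δ/2) • ((1:R)-q)) := by
      rw [smul_smul, div_mul_div_comm, mul_comm]
      rw [show δ * 2 / (δ * 2) = 1 from by field_simp, one_smul]
    rw [e3, hzero, smul_zero]
  rw [d.hpl, hrzero]

/-- Above the upper spectral bound the spectral projection is 1. -/
lemma spec_top (hAH : er.IsAH) (hscal : ∀ l : ℝ, 0 ≤ l → ∀ a ∈ er.Epos, l • a ∈ er.Epos)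
    {h pl a b q : R} (d : SpecData er h pl a b q)
    {δ : ℝ} (hδ : 0 < δ) (hhigh : -h - δ • (1:R) ∈ er.Epos) : pl = 1 := by
  have hmem : b - a - δ • (1:R) ∈ er.Epos := by
    have e : b - a - δ • (1:R) = -h - δ • (1:R) := by rw [← d.hab]; abel
    rw [e]; exact hhigh
  have hcab : a * (b - a - δ • (1:R)) = (b - a - δ • (1:R)) * a := by
    rw [mul_sub, mul_sub, sub_mul, sub_mul, d.hab0, d.hba0, scal_central]
  have h1 : a * (b - a - δ • (1:R)) ∈ er.Epos := epos_mul d.ha0 hmem hcab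
  have e2 : a * (b - a - δ • (1:R)) = -(a*a + δ • a) := by
    rw [mul_sub, mul_sub, d.hab0, mul_smul_comm, mul_one]
    abel
  rw [e2] at h1
  have h2 : a*a + δ • a ∈ er.Epos := epos_add (epos_sq d.haG) (epos_smul hscal hδ.le d.ha0)
  have hzero := epos_cancel h2 h1
  have hda : δ • a = 0 := (epos_sum_zero (epos_sq d.haG) (epos_smul hscal hδ.le d.ha0) hzero).2
  have ha0 : a = 0 := by
    have e3 : a = δ⁻¹ • (δ • a) := by
      rw [smul_smul, inv_mul_cancel₀ (ne_of_gt hδ), one_smul]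
    rw [e3, hda, smul_zero]
  have hq2 : q * q = 0 := (d.hcar q d.hqG).mp (by rw [ha0, zero_mul])
  have hq : q = 0 := by rw [← d.hidem, hq2]
  rw [d.hpl, hq, sub_zero]

end ERingProof
namespace ERingProof

open ERing Polynomial Finset

variable {R : Type*} [Ring R] [Algebra ℝ R] {er : ERing R}

/-- All per-interval facts needed for the spectral approximation. -/
lemma step_bounds (hAH : er.IsAH) (hscal : ∀ l : ℝ, 0 ≤ l → ∀ a ∈ er.Epos, l • a ∈ er.Epos)
    {g : R} (hg : g ∈ er.G) {l₁ l₂ : ℝ} (hl : l₁ ≤ l₂)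
    {p₁ a₁ b₁ q₁ p₂ a₂ b₂ q₂ : R}
    (d₁ : SpecData er (g - l₁ • (1:R)) p₁ a₁ b₁ q₁)
    (d₂ : SpecData er (g - l₂ • (1:R)) p₂ a₂ b₂ q₂) :
    (q₁ - q₂) * (q₁ - q₂) = q₁ - q₂ ∧ (q₁ - q₂) ∈ er.G ∧ (q₁ - q₂) ∈ er.Epos ∧
    (l₂ • (q₁ - q₂) - g * (q₁ - q₂) ∈ er.Epos) ∧
    (g * (q₁ - q₂) - l₁ • (q₁ - q₂) ∈ er.Epos) ∧
    (∀ z, z ∈ er.G → z * g = g * z → z * (q₁ - q₂) = (q₁ - q₂) * z) := by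
  obtain ⟨hm1, hm2⟩ := spec_mono hAH hscal hg hl d₁ d₂
  set u : R := q₁ - q₂ with hu
  have f1 : u * u = u := by
    rw [hu]
    simp only [mul_sub, sub_mul, d₁.hidem, d₂.hidem, hm1, hm2]
    abel
  have f2 : u ∈ er.G := G_sub d₁.hqG d₂.hqG
  have f3 : u ∈ er.Epos := by have := epos_sq f2; rwa [f1] at this
  -- cross commutation
  have hcent12 : ∀ z : R, z * (g - l₁ • (1:R)) = (g - l₁ • (1:R)) * z →
      z * (g - l₂ • (1:R)) = (g - l₂ • (1:R)) * z := by
    intro z hz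
    have e : g - l₂ • (1:R) = (g - l₁ • (1:R)) - (l₂ - l₁) • (1:R) := by
      rw [sub_smul]; abel
    rw [e, mul_sub, sub_mul, hz, scal_central]
  have hcent21 : ∀ z : R, z * (g - l₂ • (1:R)) = (g - l₂ • (1:R)) * z →
      z * (g - l₁ • (1:R)) = (g - l₁ • (1:R)) * z := by
    intro z hz
    have e : g - l₁ • (1:R) = (g - l₂ • (1:R)) + (l₂ - l₁) • (1:R) := by
      rw [sub_smul]; abel
    rw [e, mul_add, add_mul, hz, scal_central]
  have hb2h1 : b₂ * (g - l₁ • (1:R)) = (g - l₁ • (1:R)) * b₂ := hcent21 b₂ d₂.hbh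
  have hb2q1 : b₂ * q₁ = q₁ * b₂ := (d₁.hcomm b₂ d₂.hbG hb2h1).2.2
  have ha1h2 : a₁ * (g - l₂ • (1:R)) = (g - l₂ • (1:R)) * a₁ := hcent12 a₁ d₁.hah
  have ha1q2 : a₁ * q₂ = q₂ * a₁ := (d₂.hcomm a₁ d₁.haG ha1h2).2.2
  have hb2q2 : b₂ * q₂ = q₂ * b₂ := by rw [d₂.hbq, d₂.hqb]
  have ha1q1 : a₁ * q₁ = q₁ * a₁ := by rw [d₁.haq, d₁.hqa]
  have hb2u : b₂ * u = u * b₂ := by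
    rw [hu, mul_sub, sub_mul, hb2q1, hb2q2]
  have ha1u : a₁ * u = u * a₁ := by
    rw [hu, mul_sub, sub_mul, ha1q1, ha1q2]
  -- (1 - q₂) * u = u  and q₁ * u = u
  have f4a : (1 - q₂) * u = u := by
    rw [hu, mul_sub, sub_mul, sub_mul, one_mul, one_mul, d₂.hidem, hm1]
    abel
  have f4b : q₁ * u = u := by
    rw [hu, mul_sub, d₁.hidem, hm2]
  have f5 : a₂ * u = 0 := by
    rw [← f4a, ← mul_assoc, d₂.har, zero_mul]
  have f7 : b₁ * u = 0 := by
    rw [← f4b, ← mul_assoc, d₁.hbq, zero_mul]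
  refine ⟨f1, f2, f3, ?_, ?_, ?_⟩
  · -- l₂ • u - g * u = b₂ * u ∈ Epos
    have e : l₂ • u - g * u = b₂ * u := by
      have e1 : (g - l₂ • (1:R)) * u = a₂ * u - b₂ * u := by
        rw [← d₂.hab, sub_mul]
      rw [f5, zero_sub] at e1
      have e2 : (g - l₂ • (1:R)) * u = g * u - l₂ • u := by
        rw [sub_mul, smul_mul_assoc, one_mul]
      rw [e2] at e1
      rw [show l₂ • u - g * u = -(g * u - l₂ • u) from by abel, e1, neg_neg]
    rw [e]
    exact epos_mul d₂.hb0 f3 hb2u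
  · -- g * u - l₁ • u = a₁ * u ∈ Epos
    have e : g * u - l₁ • u = a₁ * u := by
      have e1 : (g - l₁ • (1:R)) * u = a₁ * u - b₁ * u := by
        rw [← d₁.hab, sub_mul]
      rw [f7, sub_zero] at e1
      have e2 : (g - l₁ • (1:R)) * u = g * u - l₁ • u := by
        rw [sub_mul, smul_mul_assoc, one_mul]
      rw [← e2, e1]
    rw [e]
    exact epos_mul d₁.ha0 f3 ha1u
  · intro z hz hzg
    have hzh1 : z * (g - l₁ • (1:R)) = (g - l₁ • (1:R)) * z := by
      rw [mul_sub, sub_mul, hzg, scal_central]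
    have hzh2 : z * (g - l₂ • (1:R)) = (g - l₂ • (1:R)) * z := by
      rw [mul_sub, sub_mul, hzg, scal_central]
    have hzq1 := (d₁.hcomm z hz hzh1).2.2
    have hzq2 := (d₂.hcomm z hz hzh2).2.2
    rw [hu, mul_sub, sub_mul, hzq1, hzq2]

lemma sum_Icc_one (M : Type*) [AddCommMonoid M] (f : ℕ → M) (n : ℕ) :
    ∑ i ∈ Finset.Icc 1 n, f i = ∑ j ∈ Finset.range n, f (j+1) := by
  induction n with
  | zero => simp
  | succ n ih =>
      rw [Finset.sum_Icc_succ_top (by omega), ih, Finset.sum_range_succ]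

end ERingProof

/-- Spectral approximation: given a partition
`λ₀ < L < λ₁ < ⋯ < λ_{n−1} < U < λ_n` and `λ_{i−1} ≤ γ_i ≤ λ_i`, the differences
`u_i := p_{λ_i} − p_{λ_{i−1}}` lie in `P ∩ CC(g)`, sum to `1`, and
`‖g − Σ γ_i u_i‖ ≤ ε` where `ε = max (λ_i − λ_{i−1})`. -/
theorem stmt16 {R : Type*} [Ring R] [Algebra ℝ R] (er : ERing R) (hAH : er.IsAH)
    (hscal : ∀ l : ℝ, 0 ≤ l → ∀ a ∈ er.Epos, l • a ∈ er.Epos)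
    (g : R) (hg : g ∈ er.G) (p : ℝ → R)
    (hp : ∀ l : ℝ, er.IsSpecProj g l (p l))
    (n : ℕ) (hn : 1 ≤ n) (lam gam : ℕ → ℝ)
    (h0 : lam 0 < er.specL g) (h1 : er.specL g < lam 1)
    (hchain : ∀ i, 1 ≤ i → i + 1 < n → lam i < lam (i + 1))
    (h2 : lam (n - 1) < er.specU g) (h3 : er.specU g < lam n)
    (hgam : ∀ i, 1 ≤ i → i ≤ n → lam (i - 1) ≤ gam i ∧ gam i ≤ lam i)
    (eps : ℝ)
    (heps : IsGreatest {x : ℝ | ∃ i, 1 ≤ i ∧ i ≤ n ∧ x = lam i - lam (i - 1)} eps) :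
    (∀ i, 1 ≤ i → i ≤ n →
      (p (lam i) - p (lam (i - 1))) ∈ er.P ∧
      (p (lam i) - p (lam (i - 1))) ∈ er.CC {g}) ∧
    (∑ i ∈ Finset.Icc 1 n, (p (lam i) - p (lam (i - 1)))) = 1 ∧
    er.norm1 (g - ∑ i ∈ Finset.Icc 1 n,
      gam i • (p (lam i) - p (lam (i - 1)))) ≤ eps := by
  classical
  open ERingProof in
  have hmk := fun l : ℝ => mkSpecData hAH hscal hg (hp l)
  choose A B Q hD using hmk
  -- adjacent increase of the partition
  have hlam : ∀ i, 1 ≤ i → i ≤ n → lam (i-1) < lam i := by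
    intro i hi1 hin
    by_cases hI : i = 1
    · subst hI
      have e : (1:ℕ) - 1 = 0 := rfl
      rw [e]
      exact h0.trans h1
    · by_cases hN : i = n
      · subst hN
        exact h2.trans h3
      · have hc := hchain (i-1) (by omega) (by omega)
        rwa [show i - 1 + 1 = i from by omega] at hc
  obtain ⟨K, hK, hKu, hKl⟩ := ERingProof.G_bound hscal hg
  -- bottom endpoint
  have hbot : p (lam 0) = 0 := by
    have hne : {l : ℝ | er.le (l • (1:R)) g}.Nonempty := by
      refine ⟨-K, ?_⟩
      show g - (-K) • (1:R) ∈ er.Epos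
      rw [neg_smul, sub_neg_eq_add]
      exact hKl
    have h0' : lam 0 < sSup {l : ℝ | er.le (l • (1:R)) g} := h0
    obtain ⟨l', hl'mem, hl'gt⟩ := exists_lt_of_lt_csSup hne h0'
    have hlow : (g - lam 0 • (1:R)) - (l' - lam 0) • (1:R) ∈ er.Epos := by
      have e : (g - lam 0 • (1:R)) - (l' - lam 0) • (1:R) = g - l' • (1:R) := by
        rw [sub_smul]; abel
      rw [e]; exact hl'mem
    exact ERingProof.spec_bot hscal (hD (lam 0)) (by linarith) hlow
  -- top endpoint
  have htop : p (lam n) = 1 := by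
    have hne : {l : ℝ | er.le g (l • (1:R))}.Nonempty := ⟨K, hKu⟩
    have h3' : sInf {l : ℝ | er.le g (l • (1:R))} < lam n := h3
    obtain ⟨l', hl'mem, hl'lt⟩ := exists_lt_of_csInf_lt hne h3'
    have hhigh : -(g - lam n • (1:R)) - (lam n - l') • (1:R) ∈ er.Epos := by
      have e : -(g - lam n • (1:R)) - (lam n - l') • (1:R) = l' • (1:R) - g := by
        rw [sub_smul]; abel
      rw [e]; exact hl'mem
    exact ERingProof.spec_top hAH hscal (hD (lam n)) (by linarith) hhigh
  have e_u : ∀ i : ℕ, p (lam i) - p (lam (i-1)) = Q (lam (i-1)) - Q (lam i) := by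
    intro i
    rw [(hD (lam i)).hpl, (hD (lam (i-1))).hpl]
    abel
  -- the telescoping sum
  have hsum1 : (∑ i ∈ Finset.Icc 1 n, (p (lam i) - p (lam (i-1)))) = 1 := by
    rw [ERingProof.sum_Icc_one]
    have e : ∀ j ∈ Finset.range n, p (lam (j+1)) - p (lam ((j+1) - 1))
        = p (lam (j+1)) - p (lam j) := by
      intro j _
      norm_num
    rw [Finset.sum_congr rfl e, Finset.sum_range_sub (fun j => p (lam j)) n, hbot, htop,
      sub_zero]
  have heps0 : 0 ≤ eps := by
    obtain ⟨i, hi1, hin, he⟩ := heps.1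
    have := hlam i hi1 hin
    rw [he]; linarith
  -- conclusion 1
  have conc1 : ∀ i, 1 ≤ i → i ≤ n →
      (p (lam i) - p (lam (i-1))) ∈ er.P ∧ (p (lam i) - p (lam (i-1))) ∈ er.CC {g} := by
    intro i hi1 hin
    obtain ⟨f1, f2, f3, f4, f5, f6⟩ := ERingProof.step_bounds hAH hscal hg
      (hlam i hi1 hin).le (hD (lam (i-1))) (hD (lam i))
    rw [e_u i]
    refine ⟨⟨f2, by rw [pow_two, f1]⟩, f2, ?_⟩
    rintro x ⟨hxG, hx⟩
    exact (f6 x hxG (hx g rfl)).symm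
  refine ⟨conc1, hsum1, ?_⟩
  -- norm estimate
  have m1 : ∀ i ∈ Finset.Icc 1 n, (gam i + eps) • (p (lam i) - p (lam (i-1)))
      - g * (p (lam i) - p (lam (i-1))) ∈ er.Epos := by
    intro i hi
    obtain ⟨hi1, hin⟩ := Finset.mem_Icc.mp hi
    obtain ⟨f1, f2, f3, f4, f5, f6⟩ := ERingProof.step_bounds hAH hscal hg
      (hlam i hi1 hin).le (hD (lam (i-1))) (hD (lam i))
    rw [e_u i]
    have hs1 : 0 ≤ gam i + eps - lam i := by
      obtain ⟨hg1, hg2⟩ := hgam i hi1 hin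
      have := heps.2 ⟨i, hi1, hin, rfl⟩
      linarith
    have e : (gam i + eps) • (Q (lam (i-1)) - Q (lam i)) - g * (Q (lam (i-1)) - Q (lam i))
        = (lam i • (Q (lam (i-1)) - Q (lam i)) - g * (Q (lam (i-1)) - Q (lam i)))
          + (gam i + eps - lam i) • (Q (lam (i-1)) - Q (lam i)) := by module
    rw [e]
    exact ERingProof.epos_add f4 (ERingProof.epos_smul hscal hs1 f3)
  have m2 : ∀ i ∈ Finset.Icc 1 n, g * (p (lam i) - p (lam (i-1)))
      - (gam i - eps) • (p (lam i) - p (lam (i-1))) ∈ er.Epos := by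
    intro i hi
    obtain ⟨hi1, hin⟩ := Finset.mem_Icc.mp hi
    obtain ⟨f1, f2, f3, f4, f5, f6⟩ := ERingProof.step_bounds hAH hscal hg
      (hlam i hi1 hin).le (hD (lam (i-1))) (hD (lam i))
    rw [e_u i]
    have hs2 : 0 ≤ lam (i-1) + eps - gam i := by
      obtain ⟨hg1, hg2⟩ := hgam i hi1 hin
      have := heps.2 ⟨i, hi1, hin, rfl⟩
      linarith
    have e : g * (Q (lam (i-1)) - Q (lam i)) - (gam i - eps) • (Q (lam (i-1)) - Q (lam i))
        = (g * (Q (lam (i-1)) - Q (lam i)) - lam (i-1) • (Q (lam (i-1)) - Q (lam i)))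
          + (lam (i-1) + eps - gam i) • (Q (lam (i-1)) - Q (lam i)) := by module
    rw [e]
    exact ERingProof.epos_add f5 (ERingProof.epos_smul hscal hs2 f3)
  set N : R := g - ∑ i ∈ Finset.Icc 1 n, gam i • (p (lam i) - p (lam (i-1))) with hN
  have key1 : eps • (1:R) - N = ∑ i ∈ Finset.Icc 1 n,
      ((gam i + eps) • (p (lam i) - p (lam (i-1))) - g * (p (lam i) - p (lam (i-1)))) := by
    rw [Finset.sum_sub_distrib]
    have eA : ∑ i ∈ Finset.Icc 1 n, (gam i + eps) • (p (lam i) - p (lam (i-1)))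
        = (∑ i ∈ Finset.Icc 1 n, gam i • (p (lam i) - p (lam (i-1)))) + eps • (1:R) := by
      calc ∑ i ∈ Finset.Icc 1 n, (gam i + eps) • (p (lam i) - p (lam (i-1)))
          = ∑ i ∈ Finset.Icc 1 n, (gam i • (p (lam i) - p (lam (i-1)))
            + eps • (p (lam i) - p (lam (i-1)))) := by
            refine Finset.sum_congr rfl (fun i _ => ?_)
            rw [add_smul]
        _ = (∑ i ∈ Finset.Icc 1 n, gam i • (p (lam i) - p (lam (i-1))))
            + ∑ i ∈ Finset.Icc 1 n, eps • (p (lam i) - p (lam (i-1))) :=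
            Finset.sum_add_distrib
        _ = (∑ i ∈ Finset.Icc 1 n, gam i • (p (lam i) - p (lam (i-1)))) + eps • (1:R) := by
            rw [← Finset.smul_sum, hsum1]
    have eB : ∑ i ∈ Finset.Icc 1 n, g * (p (lam i) - p (lam (i-1))) = g := by
      rw [← Finset.mul_sum, hsum1, mul_one]
    rw [eA, eB, hN]
    abel
  have key2 : N + eps • (1:R) = ∑ i ∈ Finset.Icc 1 n,
      (g * (p (lam i) - p (lam (i-1))) - (gam i - eps) • (p (lam i) - p (lam (i-1)))) := by
    rw [Finset.sum_sub_distrib]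
    have eA : ∑ i ∈ Finset.Icc 1 n, (gam i - eps) • (p (lam i) - p (lam (i-1)))
        = (∑ i ∈ Finset.Icc 1 n, gam i • (p (lam i) - p (lam (i-1)))) - eps • (1:R) := by
      calc ∑ i ∈ Finset.Icc 1 n, (gam i - eps) • (p (lam i) - p (lam (i-1)))
          = ∑ i ∈ Finset.Icc 1 n, (gam i • (p (lam i) - p (lam (i-1)))
            - eps • (p (lam i) - p (lam (i-1)))) := by
            refine Finset.sum_congr rfl (fun i _ => ?_)
            rw [sub_smul]
        _ = (∑ i ∈ Finset.Icc 1 n, gam i • (p (lam i) - p (lam (i-1))))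
            - ∑ i ∈ Finset.Icc 1 n, eps • (p (lam i) - p (lam (i-1))) :=
            Finset.sum_sub_distrib _ _
        _ = (∑ i ∈ Finset.Icc 1 n, gam i • (p (lam i) - p (lam (i-1)))) - eps • (1:R) := by
            rw [← Finset.smul_sum, hsum1]
    have eB : ∑ i ∈ Finset.Icc 1 n, g * (p (lam i) - p (lam (i-1))) = g := by
      rw [← Finset.mul_sum, hsum1, mul_one]
    rw [eA, eB, hN]
    abel
  have mem1 : eps • (1:R) - N ∈ er.Epos := by
    rw [key1]
    exact AddSubmonoid.sum_mem _ m1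
  have mem2 : N + eps • (1:R) ∈ er.Epos := by
    rw [key2]
    exact AddSubmonoid.sum_mem _ m2
  show sInf {l : ℝ | 0 ≤ l ∧ er.le (-(l • (1:R))) N ∧ er.le N (l • (1:R))} ≤ eps
  refine csInf_le ⟨0, fun x hx => hx.1⟩ ⟨heps0, ?_, ?_⟩
  · show N - (-(eps • (1:R))) ∈ er.Epos
    rw [sub_neg_eq_add]
    exact mem2
  · exact mem1
end
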